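/- arXiv:2404.04133 — 9 statements merged into one kernel-verified Lean document; each statement's English description precedes it below -/
import Mathlib

section
/- Let p, q, r be natural numbers and let c_0, c_1, …, c_p be real numbers satisfying the normalization ∑_{l=0}^{p} c_l² = 1 and the recursion c_{l+1}² = ((p − l)(q + l + 1))/((l + 1)(p + r − l)) · c_l² for all 0 ≤ l ≤ p − 1. Set ε = p(q + 1)/(r + 1). Then c_l² ≤ ε^l · c_0² for all 0 ≤ l ≤ p, and 1 − c_0² ≤ ε. -/
lemma cg_ratio_le (p q r l : ℕ) (hl : l < p) :
    (((p : ℝ) - l) * ((q : ℝ) + l + 1)) / (((l : ℝ) + 1) * ((p : ℝ) + r - l)) ≤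
      (p : ℝ) * ((q : ℝ) + 1) / ((r : ℝ) + 1) := by
  have hlp : (l : ℝ) + 1 ≤ (p : ℝ) := by exact_mod_cast hl
  have h1 : (0 : ℝ) < (l : ℝ) + 1 := by positivity
  have h2 : (0 : ℝ) < (p : ℝ) + r - l := by
    have : (0 : ℝ) ≤ (r : ℝ) := Nat.cast_nonneg r
    linarith
  have h3 : (0 : ℝ) < (r : ℝ) + 1 := by positivity
  rw [div_le_div_iff₀ (by positivity) h3]
  have hq : (0 : ℝ) ≤ (q : ℝ) := Nat.cast_nonneg q
  have hl0 : (0 : ℝ) ≤ (l : ℝ) := Nat.cast_nonneg l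
  have hr : (0 : ℝ) ≤ (r : ℝ) := Nat.cast_nonneg r
  nlinarith [mul_nonneg hq hl0, mul_nonneg (mul_nonneg hq hl0) hr,
    mul_nonneg (mul_nonneg hq hl0) (sub_nonneg.2 hlp),
    mul_nonneg hl0 hr, mul_nonneg hl0 (sub_nonneg.2 hlp),
    mul_nonneg hr (sub_nonneg.2 hlp),
    mul_nonneg (mul_nonneg hq hl0) hl0,
    mul_nonneg (mul_nonneg hl0 hl0) hr,
    sub_nonneg.2 hlp, mul_nonneg hq hr, mul_nonneg hq (sub_nonneg.2 hlp)]

/-- Abstract bound on Clebsch–Gordan-type coefficients: given the normalization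
`∑_{l=0}^p c_l² = 1` and the recursion
`c_{l+1}² = ((p-l)(q+l+1))/((l+1)(p+r-l)) · c_l²`, with `ε = p(q+1)/(r+1)`,
we have `c_l² ≤ ε^l c_0²` for all `l ≤ p` and `1 - c_0² ≤ ε`. -/
theorem stmt0 (p q r : ℕ) (c : ℕ → ℝ)
    (hnorm : ∑ l ∈ Finset.range (p + 1), (c l) ^ 2 = 1)
    (hrec : ∀ l, l < p →
      (c (l + 1)) ^ 2 =
        (((p : ℝ) - l) * ((q : ℝ) + l + 1)) / (((l : ℝ) + 1) * ((p : ℝ) + r - l)) * (c l) ^ 2) :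
    (∀ l ≤ p, (c l) ^ 2 ≤ ((p : ℝ) * ((q : ℝ) + 1) / ((r : ℝ) + 1)) ^ l * (c 0) ^ 2) ∧
      1 - (c 0) ^ 2 ≤ (p : ℝ) * ((q : ℝ) + 1) / ((r : ℝ) + 1) := by
  set ε : ℝ := (p : ℝ) * ((q : ℝ) + 1) / ((r : ℝ) + 1) with hε
  have hεnn : 0 ≤ ε := by positivity
  have hstep : ∀ l, l < p → (c (l + 1)) ^ 2 ≤ ε * (c l) ^ 2 := by
    intro l hl
    rw [hrec l hl]
    exact mul_le_mul_of_nonneg_right (cg_ratio_le p q r l hl) (sq_nonneg _)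
  have hmain : ∀ l, l ≤ p → (c l) ^ 2 ≤ ε ^ l * (c 0) ^ 2 := by
    intro l
    induction l with
    | zero => simp
    | succ n ih =>
      intro hn
      have hn' : n < p := Nat.lt_of_succ_le hn
      calc (c (n + 1)) ^ 2 ≤ ε * (c n) ^ 2 := hstep n hn'
        _ ≤ ε * (ε ^ n * (c 0) ^ 2) :=
          mul_le_mul_of_nonneg_left (ih (Nat.le_of_lt hn')) hεnn
        _ = ε ^ (n + 1) * (c 0) ^ 2 := by ring
  refine ⟨hmain, ?_⟩
  have h1 : 1 - (c 0) ^ 2 = ∑ l ∈ Finset.range p, (c (l + 1)) ^ 2 := by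
    rw [← hnorm, Finset.sum_range_succ', add_sub_cancel_right]
  have h2 : ∑ l ∈ Finset.range p, (c (l + 1)) ^ 2 ≤ ∑ l ∈ Finset.range p, ε * (c l) ^ 2 :=
    Finset.sum_le_sum fun l hl => hstep l (Finset.mem_range.mp hl)
  have h3 : ∑ l ∈ Finset.range p, ε * (c l) ^ 2 ≤ ε := by
    rw [← Finset.mul_sum]
    calc ε * ∑ l ∈ Finset.range p, (c l) ^ 2
        ≤ ε * ∑ l ∈ Finset.range (p + 1), (c l) ^ 2 := by
          apply mul_le_mul_of_nonneg_left _ hεnn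
          exact Finset.sum_le_sum_of_subset_of_nonneg
            (Finset.range_subset_range.2 (Nat.le_succ p)) (fun i _ _ => sq_nonneg _)
      _ = ε := by rw [hnorm, mul_one]
  linarith
end

section
/- For natural numbers n and ℓ with ℓ ≤ n, ∫_{−1}^{1} ((1 + x)/2)^n · P_ℓ(x) dx = 2 · (n!)² / ((n − ℓ)! · (n + ℓ + 1)!), where P_ℓ is the ℓ-th Legendre polynomial, given by the Rodrigues formula P_ℓ(x) = (1/(2^ℓ · ℓ!)) · (d/dx)^ℓ (x² − 1)^ℓ. -/
open intervalIntegral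

/-- The ℓ-th Legendre polynomial via the Rodrigues formula. -/
noncomputable def legendreP (ℓ : ℕ) (x : ℝ) : ℝ :=
  (1 / (2 ^ ℓ * (Nat.factorial ℓ : ℝ))) * iteratedDeriv ℓ (fun y : ℝ => (y ^ 2 - 1) ^ ℓ) x

namespace LegendreAux

open Polynomial Set

lemma iteratedDeriv_polyeval (p : Polynomial ℝ) (k : ℕ) :
    iteratedDeriv k (fun x : ℝ => p.eval x) = fun x => (Polynomial.derivative^[k] p).eval x := by
  induction k with
  | zero => simp
  | succ k ih =>
    rw [iteratedDeriv_succ, ih, Function.iterate_succ_apply']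
    funext x
    exact Polynomial.deriv _

lemma hasDerivAt_onePlus (x : ℝ) : HasDerivAt (fun x : ℝ => (1 + x) / 2) (1 / 2) x :=
  ((hasDerivAt_id x).const_add 1).div_const 2

lemma hasDerivAt_oneMinus (x : ℝ) : HasDerivAt (fun x : ℝ => (1 - x) / 2) (-(1 / 2)) x := by
  have := ((hasDerivAt_id x).const_sub 1).div_const 2
  exact this.congr_deriv (by norm_num)

lemma hasDerivAt_F (n j : ℕ) (x : ℝ) :
    HasDerivAt (fun x : ℝ => (n.descFactorial j : ℝ) / 2 ^ j * ((1 + x) / 2) ^ (n - j))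
      ((n.descFactorial (j + 1) : ℝ) / 2 ^ (j + 1) * ((1 + x) / 2) ^ (n - (j + 1))) x := by
  have h2 := ((hasDerivAt_onePlus x).pow (n - j)).const_mul ((n.descFactorial j : ℝ) / 2 ^ j)
  refine h2.congr_deriv ?_
  have h3 : n - (j + 1) = (n - j) - 1 := by omega
  rw [h3, Nat.descFactorial_succ]
  push_cast
  ring

lemma beta_int (b : ℕ) : ∀ a : ℕ,
    ∫ x in (-1 : ℝ)..1, ((1 + x) / 2) ^ a * ((1 - x) / 2) ^ b =
      2 * (Nat.factorial a : ℝ) * (Nat.factorial b : ℝ) / (Nat.factorial (a + b + 1) : ℝ) := by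
  induction b with
  | zero =>
    intro a
    have ha : ((a : ℝ) + 1) ≠ 0 := by positivity
    have hG : ∀ x ∈ Set.uIcc (-1 : ℝ) 1,
        HasDerivAt (fun x : ℝ => 2 / ((a : ℝ) + 1) * ((1 + x) / 2) ^ (a + 1))
          (((1 + x) / 2) ^ a * ((1 - x) / 2) ^ 0) x := by
      intro x _
      have := ((hasDerivAt_onePlus x).pow (a + 1)).const_mul (2 / ((a : ℝ) + 1))
      refine this.congr_deriv ?_
      simp only [pow_zero, mul_one, Nat.add_sub_cancel]
      push_cast
      field_simp
    have hint : IntervalIntegrable (fun x : ℝ => ((1 + x) / 2) ^ a * ((1 - x) / 2) ^ 0)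
        MeasureTheory.volume (-1) 1 := (by fun_prop : Continuous _).intervalIntegrable _ _
    rw [integral_eq_sub_of_hasDerivAt hG hint]
    have h0 : ((1 + (-1 : ℝ)) / 2) = 0 := by norm_num
    rw [h0]
    simp [Nat.factorial_succ, Nat.factorial]
    field_simp
  | succ b ih =>
    intro a
    have ha : ((a : ℝ) + 1) ≠ 0 := by positivity
    set u : ℝ → ℝ := fun x => ((1 - x) / 2) ^ (b + 1) with hu_def
    set u' : ℝ → ℝ := fun x => ((b : ℝ) + 1) * ((1 - x) / 2) ^ b * (-(1 / 2)) with hu'_def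
    set v : ℝ → ℝ := fun x => 2 / ((a : ℝ) + 1) * ((1 + x) / 2) ^ (a + 1) with hv_def
    set v' : ℝ → ℝ := fun x => ((1 + x) / 2) ^ a with hv'_def
    have hu : ∀ x ∈ Set.uIcc (-1 : ℝ) 1, HasDerivAt u (u' x) x := by
      intro x _
      have := (hasDerivAt_oneMinus x).pow (b + 1)
      refine this.congr_deriv ?_
      simp only [hu'_def, Nat.add_sub_cancel]
      push_cast
      ring
    have hv : ∀ x ∈ Set.uIcc (-1 : ℝ) 1, HasDerivAt v (v' x) x := by
      intro x _
      have := ((hasDerivAt_onePlus x).pow (a + 1)).const_mul (2 / ((a : ℝ) + 1))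
      refine this.congr_deriv ?_
      simp only [hv'_def, Nat.add_sub_cancel]
      push_cast; field_simp
    have hu' : IntervalIntegrable u' MeasureTheory.volume (-1) 1 :=
      (by fun_prop : Continuous u').intervalIntegrable _ _
    have hv' : IntervalIntegrable v' MeasureTheory.volume (-1) 1 :=
      (by fun_prop : Continuous v').intervalIntegrable _ _
    have ibp := integral_mul_deriv_eq_deriv_mul hu hv hu' hv'
    have hb1 : u 1 = 0 := by simp [hu_def]
    have hb2 : v (-1 : ℝ) = 0 := by simp [hv_def]
    have hL : ∫ x in (-1 : ℝ)..1, ((1 + x) / 2) ^ a * ((1 - x) / 2) ^ (b + 1)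
        = ∫ x in (-1 : ℝ)..1, u x * v' x := by
      apply integral_congr; intro x _; simp [hu_def, hv'_def]; ring
    have hR : ∫ x in (-1 : ℝ)..1, u' x * v x
        = (-((b : ℝ) + 1) / ((a : ℝ) + 1)) *
            ∫ x in (-1 : ℝ)..1, ((1 + x) / 2) ^ (a + 1) * ((1 - x) / 2) ^ b := by
      rw [← integral_const_mul]
      apply integral_congr; intro x _
      simp only [hu'_def, hv_def]
      field_simp
    rw [hL, ibp, hb1, hb2, hR, ih (a + 1)]
    have hfac : (Nat.factorial (a + 1 + b + 1) : ℝ) = (Nat.factorial (a + (b + 1) + 1) : ℝ) := by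
      norm_num; ring_nf
    have e1 : (Nat.factorial (a + 1) : ℝ) = ((a : ℝ) + 1) * Nat.factorial a := by
      rw [Nat.factorial_succ]; push_cast; ring
    have e2 : (Nat.factorial (b + 1) : ℝ) = ((b : ℝ) + 1) * Nat.factorial b := by
      rw [Nat.factorial_succ]; push_cast; ring
    have hfn : (Nat.factorial (a + (b + 1) + 1) : ℝ) ≠ 0 := by
      exact_mod_cast Nat.factorial_ne_zero _
    rw [hfac, e1, e2]
    field_simp
    ring

lemma qroot (ℓ m : ℕ) (hm : m < ℓ) (t : ℝ) (ht : t = 1 ∨ t = -1) :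
    (Polynomial.derivative^[m] (((X : ℝ[X]) ^ 2 - 1) ^ ℓ)).eval t = 0 := by
  apply Polynomial.isRoot_iterate_derivative_of_lt_rootMultiplicity
  refine lt_of_lt_of_le hm ?_
  have hqne : (((X : ℝ[X]) ^ 2 - 1) ^ ℓ) ≠ 0 := by
    apply pow_ne_zero
    intro hq
    have := congrArg (Polynomial.eval (0 : ℝ)) hq
    simp at this
  rw [Polynomial.le_rootMultiplicity_iff hqne]
  refine pow_dvd_pow_of_dvd (Polynomial.dvd_iff_isRoot.mpr ?_) ℓ
  rcases ht with h | h <;> simp [h, Polynomial.IsRoot]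

lemma main_step (n ℓ j : ℕ) (hj : j < ℓ) :
    (∫ x in (-1 : ℝ)..1, ((n.descFactorial j : ℝ) / 2 ^ j * ((1 + x) / 2) ^ (n - j)) *
        (Polynomial.derivative^[ℓ - j] (((X : ℝ[X]) ^ 2 - 1) ^ ℓ)).eval x) =
      -∫ x in (-1 : ℝ)..1,
        ((n.descFactorial (j + 1) : ℝ) / 2 ^ (j + 1) * ((1 + x) / 2) ^ (n - (j + 1))) *
        (Polynomial.derivative^[ℓ - (j + 1)] (((X : ℝ[X]) ^ 2 - 1) ^ ℓ)).eval x := by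
  set q : ℝ[X] := ((X : ℝ[X]) ^ 2 - 1) ^ ℓ with hq
  have hstep : ℓ - j = (ℓ - (j + 1)) + 1 := by omega
  have hder : Polynomial.derivative^[ℓ - j] q
      = Polynomial.derivative (Polynomial.derivative^[ℓ - (j + 1)] q) := by
    rw [hstep, Function.iterate_succ_apply']
  have hu : ∀ x ∈ Set.uIcc (-1 : ℝ) 1,
      HasDerivAt (fun x : ℝ => (n.descFactorial j : ℝ) / 2 ^ j * ((1 + x) / 2) ^ (n - j))
        ((n.descFactorial (j + 1) : ℝ) / 2 ^ (j + 1) * ((1 + x) / 2) ^ (n - (j + 1))) x :=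
    fun x _ => hasDerivAt_F n j x
  have hv : ∀ x ∈ Set.uIcc (-1 : ℝ) 1,
      HasDerivAt (fun x : ℝ => (Polynomial.derivative^[ℓ - (j + 1)] q).eval x)
        ((Polynomial.derivative^[ℓ - j] q).eval x) x := by
    intro x _
    rw [hder]
    exact Polynomial.hasDerivAt _ x
  have hu' : IntervalIntegrable
      (fun x : ℝ => (n.descFactorial (j + 1) : ℝ) / 2 ^ (j + 1) * ((1 + x) / 2) ^ (n - (j + 1)))
      MeasureTheory.volume (-1) 1 := (by fun_prop : Continuous _).intervalIntegrable _ _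
  have hv' : IntervalIntegrable (fun x : ℝ => (Polynomial.derivative^[ℓ - j] q).eval x)
      MeasureTheory.volume (-1) 1 :=
    ((Polynomial.derivative^[ℓ - j] q).continuous_aeval).intervalIntegrable _ _
  have ibp := integral_mul_deriv_eq_deriv_mul hu hv hu' hv'
  have hb1 : (Polynomial.derivative^[ℓ - (j + 1)] q).eval (1 : ℝ) = 0 :=
    qroot ℓ _ (by omega) 1 (Or.inl rfl)
  have hb2 : (Polynomial.derivative^[ℓ - (j + 1)] q).eval (-1 : ℝ) = 0 :=
    qroot ℓ _ (by omega) (-1) (Or.inr rfl)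
  rw [ibp, hb1, hb2]
  ring

lemma chain (n ℓ : ℕ) : ∀ j, j ≤ ℓ →
    (∫ x in (-1 : ℝ)..1,
        ((n.descFactorial (ℓ - j) : ℝ) / 2 ^ (ℓ - j) * ((1 + x) / 2) ^ (n - (ℓ - j))) *
        (Polynomial.derivative^[ℓ - (ℓ - j)] (((X : ℝ[X]) ^ 2 - 1) ^ ℓ)).eval x) =
      (-1 : ℝ) ^ j *
      ∫ x in (-1 : ℝ)..1,
        ((n.descFactorial ℓ : ℝ) / 2 ^ ℓ * ((1 + x) / 2) ^ (n - ℓ)) *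
        (((X : ℝ[X]) ^ 2 - 1) ^ ℓ).eval x := by
  intro j
  induction j with
  | zero => intro _; simp
  | succ j ih =>
    intro hj
    have hjl : j ≤ ℓ := by omega
    have h1 : ℓ - (j + 1) < ℓ := by omega
    have h2 : ℓ - (j + 1) + 1 = ℓ - j := by omega
    have hstep := main_step n ℓ (ℓ - (j + 1)) h1
    rw [h2] at hstep
    rw [hstep, ih hjl]
    ring

end LegendreAux

open LegendreAux Polynomial in
/-- `∫_{-1}^1 ((1+x)/2)^n P_ℓ(x) dx = 2 (n!)² / ((n-ℓ)! (n+ℓ+1)!)` for `ℓ ≤ n`. -/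
theorem stmt1 (n ℓ : ℕ) (h : ℓ ≤ n) :
    ∫ x in (-1 : ℝ)..1, ((1 + x) / 2) ^ n * legendreP ℓ x =
      2 * (Nat.factorial n : ℝ) ^ 2 /
        ((Nat.factorial (n - ℓ) : ℝ) * (Nat.factorial (n + ℓ + 1) : ℝ)) := by
  set q : ℝ[X] := ((X : ℝ[X]) ^ 2 - 1) ^ ℓ with hq
  have hgq : (fun y : ℝ => (y ^ 2 - 1) ^ ℓ) = fun y : ℝ => q.eval y := by
    funext y; simp [hq]
  have hI0 : ∫ x in (-1 : ℝ)..1, ((1 + x) / 2) ^ n * legendreP ℓ x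
      = (1 / (2 ^ ℓ * (Nat.factorial ℓ : ℝ))) *
        ∫ x in (-1 : ℝ)..1,
          ((n.descFactorial 0 : ℝ) / 2 ^ 0 * ((1 + x) / 2) ^ (n - 0)) *
          (Polynomial.derivative^[ℓ - 0] q).eval x := by
    rw [← integral_const_mul]
    apply integral_congr
    intro x _
    simp only [legendreP, hgq, iteratedDeriv_polyeval, Nat.descFactorial_zero, Nat.sub_zero,
      pow_zero, Nat.cast_one]
    ring
  have hchain := chain n ℓ ℓ le_rfl
  rw [Nat.sub_self] at hchain
  have hIl : (∫ x in (-1 : ℝ)..1,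
        ((n.descFactorial ℓ : ℝ) / 2 ^ ℓ * ((1 + x) / 2) ^ (n - ℓ)) * q.eval x)
      = ((n.descFactorial ℓ : ℝ) * (-4) ^ ℓ / 2 ^ ℓ) *
        ∫ x in (-1 : ℝ)..1, ((1 + x) / 2) ^ n * ((1 - x) / 2) ^ ℓ := by
    rw [← integral_const_mul]
    apply integral_congr
    intro x _
    simp only [hq, eval_pow, eval_sub, eval_one, eval_X]
    have hx : x ^ 2 - 1 = (-4) * ((1 - x) / 2) * ((1 + x) / 2) := by ring
    have hn : ((1 + x) / 2) ^ n = ((1 + x) / 2) ^ (n - ℓ) * ((1 + x) / 2) ^ ℓ := by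
      rw [← pow_add, Nat.sub_add_cancel h]
    rw [hx, mul_pow, mul_pow, hn]
    ring
  rw [hI0, hchain, hIl, beta_int ℓ n]
  have hdesc : ((n - ℓ).factorial : ℝ) * (n.descFactorial ℓ : ℝ) = (n.factorial : ℝ) := by
    exact_mod_cast congrArg (Nat.cast (R := ℝ)) (Nat.factorial_mul_descFactorial h)
  have h4 : ((-1 : ℝ)) ^ ℓ * (-4 : ℝ) ^ ℓ = 2 ^ (ℓ * 2) := by
    rw [← mul_pow, pow_mul']
    norm_num
  have hd : (n.descFactorial ℓ : ℝ) = (n.factorial : ℝ) / ((n - ℓ).factorial : ℝ) := by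
    field_simp [Nat.factorial_ne_zero] at hdesc ⊢
    linarith [hdesc]
  have hne1 : ((n - ℓ).factorial : ℝ) ≠ 0 := by exact_mod_cast Nat.factorial_ne_zero _
  have hne2 : ((n + ℓ + 1).factorial : ℝ) ≠ 0 := by exact_mod_cast Nat.factorial_ne_zero _
  have hne3 : (ℓ.factorial : ℝ) ≠ 0 := by exact_mod_cast Nat.factorial_ne_zero _
  have hne4 : (2 : ℝ) ^ ℓ ≠ 0 := by positivity
  rw [hd]
  field_simp
  linear_combination h4
end

section
/- For all natural numbers n and ℓ with ℓ ≤ n: 0 ≤ 1 − (n! · (n+1)!) / ((n − ℓ)! · (n + ℓ + 1)!) ≤ ℓ(ℓ + 1)/(n + ℓ + 1). -/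
/-- For `ℓ ≤ n`: `0 ≤ 1 - n!(n+1)!/((n-ℓ)!(n+ℓ+1)!) ≤ ℓ(ℓ+1)/(n+ℓ+1)`. -/
theorem stmt2 (n ℓ : ℕ) (h : ℓ ≤ n) :
    0 ≤ 1 - (Nat.factorial n : ℝ) * (Nat.factorial (n + 1)) /
          ((Nat.factorial (n - ℓ) : ℝ) * (Nat.factorial (n + ℓ + 1))) ∧
    1 - (Nat.factorial n : ℝ) * (Nat.factorial (n + 1)) /
          ((Nat.factorial (n - ℓ) : ℝ) * (Nat.factorial (n + ℓ + 1))) ≤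
        (ℓ : ℝ) * ((ℓ : ℝ) + 1) / ((n : ℝ) + ℓ + 1) := by
  induction ℓ with
  | zero =>
    have hne : ((Nat.factorial n : ℝ) * (Nat.factorial (n + 1))) ≠ 0 := by
      positivity
    simp only [Nat.sub_zero, Nat.add_zero, Nat.cast_zero, zero_add]
    rw [div_self hne]
    norm_num
  | succ l ih =>
    have hl : l ≤ n := Nat.le_of_succ_le h
    obtain ⟨ih1, ih2⟩ := ih hl
    have hln : (l : ℝ) ≤ (n : ℝ) := by exact_mod_cast hl
    have hlt : (l : ℝ) + 1 ≤ (n : ℝ) := by exact_mod_cast h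
    have hcast : ((n - (l+1) : ℕ) : ℝ) = (n : ℝ) - ((l : ℝ) + 1) := by
      push_cast [Nat.cast_sub h]; ring
    have hfl : ((Nat.factorial (n - l) : ℝ)) = ((n : ℝ) - l) * (Nat.factorial (n - (l + 1)) : ℝ) := by
      have e : n - l = (n - (l + 1)) + 1 := by omega
      rw [e, Nat.factorial_succ]
      push_cast [hcast]
      ring
    have hfu : ((Nat.factorial (n + (l + 1) + 1) : ℝ)) = ((n : ℝ) + l + 2) * (Nat.factorial (n + l + 1) : ℝ) := by
      have e : n + (l + 1) + 1 = (n + l + 1) + 1 := by omega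
      rw [e, Nat.factorial_succ]
      push_cast
      ring
    set A : ℝ := (Nat.factorial n : ℝ) * (Nat.factorial (n + 1)) with hA
    set D : ℝ := (Nat.factorial (n - l) : ℝ) * (Nat.factorial (n + l + 1)) with hD
    have hDpos : 0 < D := by positivity
    have hApos : 0 < A := by positivity
    have hnl2 : (0:ℝ) < (n:ℝ) - l := by linarith
    have hd1 : (0:ℝ) < (n:ℝ) + l + 1 := by positivity
    have hd2 : (0:ℝ) < (n:ℝ) + l + 2 := by positivity
    have hD' : ((Nat.factorial (n - (l + 1)) : ℝ) * (Nat.factorial (n + (l + 1) + 1)))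
        = D * ((n : ℝ) + l + 2) / ((n : ℝ) - l) := by
      rw [hfu, hD, hfl]
      field_simp
    rw [hD']
    have key : A / (D * ((n : ℝ) + l + 2) / ((n : ℝ) - l))
        = (A / D) * (((n:ℝ) - l) / ((n:ℝ) + l + 2)) := by
      field_simp
    rw [key]
    set a : ℝ := A / D with ha
    have hapos : 0 < a := div_pos hApos hDpos
    clear_value A D a
    rw [le_div_iff₀ hd1] at ih2
    have hc1 : ((n:ℝ) - l) / ((n:ℝ) + l + 2) ≤ 1 := by
      rw [div_le_one hd2]; linarith
    have hc0 : 0 ≤ ((n:ℝ) - l) / ((n:ℝ) + l + 2) := by positivity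
    have ha1 : a ≤ 1 := by linarith
    constructor
    · nlinarith
    · push_cast
      have hdenom : ((n:ℝ) + ((l:ℝ) + 1) + 1) = (n:ℝ) + l + 2 := by ring
      rw [hdenom, le_div_iff₀ hd2]
      have hexp : a * (((n:ℝ) - l) / ((n:ℝ) + l + 2)) * ((n:ℝ) + l + 2) = a * ((n:ℝ) - l) := by
        field_simp
      rw [sub_mul, one_mul, hexp]
      nlinarith [mul_nonneg (sub_nonneg.mpr ih2) hnl2.le, mul_nonneg hapos.le hnl2.le]
end

section
/- For all natural numbers n and m with m ≤ n: ∑_{ℓ=m}^{n} (2ℓ + 1) · n!(n+1)! / ((n − ℓ)! · (n + ℓ + 1)!) = n!(n+1)! / ((n − m)! · (n + m)!). -/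
/-- For `m ≤ n`:
`∑_{ℓ=m}^n (2ℓ+1) n!(n+1)!/((n-ℓ)!(n+ℓ+1)!) = n!(n+1)!/((n-m)!(n+m)!)`. -/
theorem stmt6 (n m : ℕ) (h : m ≤ n) :
    ∑ ℓ ∈ Finset.Icc m n,
        (2 * (ℓ : ℝ) + 1) * ((Nat.factorial n : ℝ) * (Nat.factorial (n + 1))) /
          ((Nat.factorial (n - ℓ) : ℝ) * (Nat.factorial (n + ℓ + 1))) =
      (Nat.factorial n : ℝ) * (Nat.factorial (n + 1)) /
        ((Nat.factorial (n - m) : ℝ) * (Nat.factorial (n + m))) := by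
  obtain ⟨k, rfl⟩ : ∃ k, n = m + k := ⟨n - m, (Nat.add_sub_cancel' h).symm⟩
  clear h
  induction k generalizing m with
  | zero =>
    simp only [Nat.add_zero, Finset.Icc_self, Finset.sum_singleton, Nat.sub_self]
    have h1 : (m + m + 1).factorial = (m + m + 1) * (m + m).factorial :=
      Nat.factorial_succ _
    rw [h1]
    have h2 : ((m + m).factorial : ℝ) ≠ 0 := Nat.cast_ne_zero.2 (Nat.factorial_ne_zero _)
    push_cast
    field_simp
    ring
  | succ k ih =>
    have hlt : m < m + (k + 1) := by omega
    rw [show Finset.Icc m (m + (k + 1)) = insert m (Finset.Icc (m + 1) (m + (k + 1))) by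
      ext x; simp [Finset.mem_Icc]; omega]
    rw [Finset.sum_insert (by simp)]
    set n := m + (k + 1) with hn
    have := ih (m + 1)
    rw [show m + 1 + k = n by omega, show n + (m + 1) = n + m + 1 by omega] at this
    rw [this]
    clear_value n
    clear ih this hn
    have e1 : n - m = (n - (m + 1)) + 1 := by omega
    have e2 : (n - m).factorial = (n - m) * (n - (m + 1)).factorial := by
      rw [e1, Nat.factorial_succ, ← e1]
    have e3 : (n + m + 1).factorial = (n + m + 1) * (n + m).factorial :=
      Nat.factorial_succ _
    rw [e2, e3]
    have h2 : ((n - (m + 1)).factorial : ℝ) ≠ 0 := Nat.cast_ne_zero.2 (Nat.factorial_ne_zero _)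
    have h3 : ((n + m).factorial : ℝ) ≠ 0 := Nat.cast_ne_zero.2 (Nat.factorial_ne_zero _)
    have h4 : (n : ℝ) - m ≠ 0 := sub_ne_zero.2 (by exact_mod_cast hlt.ne')
    have h5 : (n : ℝ) + m + 1 ≠ 0 := by positivity
    have hmn : m ≤ n := le_of_lt hlt
    push_cast [hmn]
    field_simp
    ring
end

section
/- For each fixed natural number ℓ, the sequence n ↦ n!(n+1)!/((n − ℓ)!(n + ℓ + 1)!), defined for n ≥ ℓ, is monotonically increasing in n and converges to 1 as n → ∞. -/
open Filter

private lemma fact_pos' (m : ℕ) : (0:ℝ) < (Nat.factorial m : ℝ) := by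
  exact_mod_cast m.factorial_pos

private lemma stmt8_lower (ℓ : ℕ) : ∀ n, ℓ ≤ n →
    (((n:ℝ) - ℓ) / ((n:ℝ) + ℓ + 2)) ^ ℓ ≤
      (Nat.factorial n : ℝ) * (Nat.factorial (n + 1)) /
        ((Nat.factorial (n - ℓ) : ℝ) * (Nat.factorial (n + ℓ + 1))) := by
  induction ℓ with
  | zero =>
    intro n _
    simp [div_self (mul_pos (fact_pos' n) (fact_pos' (n+1))).ne']
  | succ ℓ ih =>
    intro n hn
    obtain ⟨k, rfl⟩ := Nat.exists_eq_add_of_le hn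
    have hℓn : ℓ ≤ ℓ + 1 + k := by omega
    have h1 : (ℓ + 1 + k) - (ℓ + 1) = k := by omega
    have h2 : (ℓ + 1 + k) - ℓ = k + 1 := by omega
    have hk : (0:ℝ) ≤ (k:ℝ) := Nat.cast_nonneg k
    have hl : (0:ℝ) ≤ (ℓ:ℝ) := Nat.cast_nonneg ℓ
    have key := ih (ℓ+1+k) hℓn
    set R : ℝ := (Nat.factorial (ℓ+1+k) : ℝ) * (Nat.factorial (ℓ+1+k + 1)) /
        ((Nat.factorial ((ℓ+1+k) - ℓ) : ℝ) * (Nat.factorial ((ℓ+1+k) + ℓ + 1))) with hR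
    have hbase1 : ((((ℓ+1+k:ℕ)):ℝ) - ℓ) / ((((ℓ+1+k:ℕ)):ℝ) + ℓ + 2)
        = ((k:ℝ)+1) / (2*ℓ+k+3) := by push_cast; ring_nf
    rw [hbase1] at key
    have hbase2 : ((((ℓ+1+k:ℕ)):ℝ) - (↑(ℓ+1))) / ((((ℓ+1+k:ℕ)):ℝ) + (↑(ℓ+1)) + 2)
        = ((k:ℝ)) / (2*ℓ+k+4) := by push_cast; ring_nf
    rw [hbase2]
    have fs1 : ((Nat.factorial ((ℓ+1+k) + (ℓ+1) + 1)) : ℝ)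
        = ((2*ℓ+k+3 : ℝ)) * (Nat.factorial ((ℓ+1+k) + ℓ + 1)) := by
      have e1 : (ℓ+1+k) + (ℓ+1) + 1 = ((ℓ+1+k) + ℓ + 1) + 1 := by omega
      rw [e1, Nat.factorial_succ]; push_cast; ring
    have fs2 : ((Nat.factorial (k+1)) : ℝ) = ((k:ℝ)+1) * (Nat.factorial k) := by
      rw [Nat.factorial_succ]; push_cast; ring
    have heq : (Nat.factorial (ℓ+1+k) : ℝ) * (Nat.factorial (ℓ+1+k + 1)) /
        ((Nat.factorial ((ℓ+1+k) - (ℓ+1)) : ℝ) * (Nat.factorial ((ℓ+1+k) + (ℓ+1) + 1)))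
        = R * (((k:ℝ)+1) / (2*ℓ+k+3)) := by
      rw [h1, fs1, hR, h2, fs2]
      have d1 : (0:ℝ) < (Nat.factorial k : ℝ) := fact_pos' k
      have d2 : (0:ℝ) < (Nat.factorial ((ℓ+1+k) + ℓ + 1) : ℝ) := fact_pos' _
      have d3 : (0:ℝ) < 2*(ℓ:ℝ)+k+3 := by linarith
      have d4 : (0:ℝ) < (k:ℝ)+1 := by linarith
      field_simp
    rw [heq]
    have hr0 : (0:ℝ) ≤ ((k:ℝ)+1) / (2*ℓ+k+3) := by positivity
    have hq0 : (0:ℝ) ≤ ((k:ℝ)) / (2*ℓ+k+4) := by positivity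
    have hqr : ((k:ℝ)) / (2*ℓ+k+4) ≤ ((k:ℝ)+1) / (2*ℓ+k+3) := by
      rw [div_le_div_iff₀ (by linarith) (by linarith)]
      nlinarith
    calc ((k:ℝ) / (2*↑ℓ+↑k+4)) ^ (ℓ+1) ≤ (((k:ℝ)+1) / (2*↑ℓ+↑k+3)) ^ (ℓ+1) :=
          pow_le_pow_left₀ hq0 hqr _
      _ = (((k:ℝ)+1) / (2*↑ℓ+↑k+3)) ^ ℓ * (((k:ℝ)+1) / (2*↑ℓ+↑k+3)) := by ring
      _ ≤ R * (((k:ℝ)+1) / (2*↑ℓ+↑k+3)) := mul_le_mul_of_nonneg_right key hr0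

private lemma stmt8_upper (ℓ : ℕ) : ∀ n, ℓ ≤ n →
    (Nat.factorial n : ℝ) * (Nat.factorial (n + 1)) /
        ((Nat.factorial (n - ℓ) : ℝ) * (Nat.factorial (n + ℓ + 1))) ≤ 1 := by
  induction ℓ with
  | zero =>
    intro n _
    simp [div_self (mul_pos (fact_pos' n) (fact_pos' (n+1))).ne']
  | succ ℓ ih =>
    intro n hn
    obtain ⟨k, rfl⟩ := Nat.exists_eq_add_of_le hn
    have hℓn : ℓ ≤ ℓ + 1 + k := by omega
    have h1 : (ℓ + 1 + k) - (ℓ + 1) = k := by omega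
    have h2 : (ℓ + 1 + k) - ℓ = k + 1 := by omega
    have key := ih (ℓ+1+k) hℓn
    have hk : (0:ℝ) ≤ (k:ℝ) := Nat.cast_nonneg k
    have hl : (0:ℝ) ≤ (ℓ:ℝ) := Nat.cast_nonneg ℓ
    have fs1 : ((Nat.factorial ((ℓ+1+k) + (ℓ+1) + 1)) : ℝ)
        = ((2*ℓ+k+3 : ℝ)) * (Nat.factorial ((ℓ+1+k) + ℓ + 1)) := by
      have e1 : (ℓ+1+k) + (ℓ+1) + 1 = ((ℓ+1+k) + ℓ + 1) + 1 := by omega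
      rw [e1, Nat.factorial_succ]; push_cast; ring
    have fs2 : ((Nat.factorial (k+1)) : ℝ) = ((k:ℝ)+1) * (Nat.factorial k) := by
      rw [Nat.factorial_succ]; push_cast; ring
    have heq : (Nat.factorial (ℓ+1+k) : ℝ) * (Nat.factorial (ℓ+1+k + 1)) /
        ((Nat.factorial ((ℓ+1+k) - (ℓ+1)) : ℝ) * (Nat.factorial ((ℓ+1+k) + (ℓ+1) + 1)))
        = ((Nat.factorial (ℓ+1+k) : ℝ) * (Nat.factorial (ℓ+1+k + 1)) /
          ((Nat.factorial ((ℓ+1+k) - ℓ) : ℝ) * (Nat.factorial ((ℓ+1+k) + ℓ + 1))))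
          * (((k:ℝ)+1) / (2*ℓ+k+3)) := by
      rw [h1, fs1, h2, fs2]
      have d1 : (0:ℝ) < (Nat.factorial k : ℝ) := fact_pos' k
      have d2 : (0:ℝ) < (Nat.factorial ((ℓ+1+k) + ℓ + 1) : ℝ) := fact_pos' _
      have d3 : (0:ℝ) < 2*(ℓ:ℝ)+k+3 := by linarith
      have d4 : (0:ℝ) < (k:ℝ)+1 := by linarith
      field_simp
    rw [heq]
    have hr1 : ((k:ℝ)+1) / (2*ℓ+k+3) ≤ 1 := by
      rw [div_le_one (by linarith)]; linarith
    have hR0 : (0:ℝ) ≤ (Nat.factorial (ℓ+1+k) : ℝ) * (Nat.factorial (ℓ+1+k + 1)) /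
          ((Nat.factorial ((ℓ+1+k) - ℓ) : ℝ) * (Nat.factorial ((ℓ+1+k) + ℓ + 1))) := by
      positivity
    calc _ ≤ (1:ℝ) * 1 := mul_le_mul key hr1 (by positivity) (by linarith)
      _ = 1 := by ring

/-- For fixed `ℓ`, the sequence `n ↦ n!(n+1)!/((n-ℓ)!(n+ℓ+1)!)` (defined for `n ≥ ℓ`)
is monotonically increasing in `n` and converges to `1` as `n → ∞`. -/
theorem stmt8 (ℓ : ℕ) :
    (∀ n, ℓ ≤ n →
      (Nat.factorial n : ℝ) * (Nat.factorial (n + 1)) /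
          ((Nat.factorial (n - ℓ) : ℝ) * (Nat.factorial (n + ℓ + 1))) ≤
        (Nat.factorial (n + 1) : ℝ) * (Nat.factorial (n + 2)) /
          ((Nat.factorial (n + 1 - ℓ) : ℝ) * (Nat.factorial (n + 1 + ℓ + 1)))) ∧
    Filter.Tendsto
      (fun n : ℕ =>
        (Nat.factorial n : ℝ) * (Nat.factorial (n + 1)) /
          ((Nat.factorial (n - ℓ) : ℝ) * (Nat.factorial (n + ℓ + 1))))
      Filter.atTop (nhds 1) := by
  constructor
  · -- monotonicity
    intro n hn
    obtain ⟨k, rfl⟩ := Nat.exists_eq_add_of_le hn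
    have hk : (0:ℝ) ≤ (k:ℝ) := Nat.cast_nonneg k
    have hl : (0:ℝ) ≤ (ℓ:ℝ) := Nat.cast_nonneg ℓ
    have h1 : (ℓ + k) - ℓ = k := by omega
    have h2 : (ℓ + k) + 1 - ℓ = k + 1 := by omega
    rw [h1, h2]
    rw [div_le_div_iff₀ (by positivity) (by positivity)]
    have fs1 : ((Nat.factorial ((ℓ+k) + 1 + ℓ + 1)) : ℝ)
        = ((2*ℓ+k+2 : ℝ)) * (Nat.factorial ((ℓ+k) + ℓ + 1)) := by
      have e1 : (ℓ+k) + 1 + ℓ + 1 = ((ℓ+k) + ℓ + 1) + 1 := by omega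
      rw [e1, Nat.factorial_succ]; push_cast; ring
    have fs2 : ((Nat.factorial (k+1)) : ℝ) = ((k:ℝ)+1) * (Nat.factorial k) := by
      rw [Nat.factorial_succ]; push_cast; ring
    have fs3 : ((Nat.factorial ((ℓ+k) + 1)) : ℝ) = ((ℓ:ℝ)+k+1) * (Nat.factorial (ℓ+k)) := by
      rw [Nat.factorial_succ]; push_cast; ring
    have fs4 : ((Nat.factorial ((ℓ+k) + 2)) : ℝ)
        = ((ℓ:ℝ)+k+2) * (Nat.factorial ((ℓ+k)+1)) := by
      have e1 : (ℓ+k) + 2 = ((ℓ+k) + 1) + 1 := by omega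
      rw [e1, Nat.factorial_succ]; push_cast; ring
    rw [fs1, fs2, fs4, fs3]
    have d1 : (0:ℝ) ≤ (Nat.factorial (ℓ+k) : ℝ) := (fact_pos' _).le
    have d2 : (0:ℝ) ≤ (Nat.factorial ((ℓ+k) + ℓ + 1) : ℝ) := (fact_pos' _).le
    have d3 : (0:ℝ) ≤ (Nat.factorial k : ℝ) := (fact_pos' _).le
    nlinarith [mul_nonneg (mul_nonneg d1 d1) (mul_nonneg d2 d3),
      mul_nonneg (mul_nonneg (mul_nonneg d1 d1) (mul_nonneg d2 d3)) (mul_nonneg hk hl),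
      mul_nonneg (mul_nonneg (mul_nonneg d1 d1) (mul_nonneg d2 d3)) (mul_nonneg hl hl),
      mul_nonneg (mul_nonneg (mul_nonneg d1 d1) (mul_nonneg d2 d3)) hl]
  · -- convergence, by squeezing between ((n-ℓ)/(n+ℓ+2))^ℓ and 1
    have hden : Tendsto (fun n : ℕ => (n:ℝ) + ℓ + 2) atTop atTop := by
      apply tendsto_atTop_add_const_right
      apply tendsto_atTop_add_const_right
      exact tendsto_natCast_atTop_atTop
    have hzero : Tendsto (fun n : ℕ => (2*(ℓ:ℝ)+2) / ((n:ℝ) + ℓ + 2)) atTop (nhds 0) := by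
      simpa [div_eq_mul_inv] using hden.inv_tendsto_atTop.const_mul (2*(ℓ:ℝ)+2)
    have hbase : Tendsto (fun n : ℕ => ((n:ℝ) - ℓ) / ((n:ℝ) + ℓ + 2)) atTop (nhds 1) := by
      have heq : ∀ n : ℕ, ((n:ℝ) - ℓ) / ((n:ℝ) + ℓ + 2)
          = 1 - (2*(ℓ:ℝ)+2) / ((n:ℝ) + ℓ + 2) := by
        intro n
        have hn0 : (0:ℝ) < (n:ℝ) + ℓ + 2 := by positivity
        field_simp
        ring
      simp only [heq]
      simpa using (tendsto_const_nhds (x := (1:ℝ)) (f := atTop)).sub hzero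
    have hlow : Tendsto (fun n : ℕ => (((n:ℝ) - ℓ) / ((n:ℝ) + ℓ + 2)) ^ ℓ) atTop (nhds 1) := by
      simpa using hbase.pow ℓ
    apply tendsto_of_tendsto_of_tendsto_of_le_of_le' hlow tendsto_const_nhds
    · filter_upwards [eventually_ge_atTop ℓ] with n hn
      exact stmt8_lower ℓ n hn
    · filter_upwards [eventually_ge_atTop ℓ] with n hn
      exact stmt8_upper ℓ n hn
end

section
/- For every integer N ≥ 1: ∑_{ℓ=N+1}^{∞} Γ(ℓ + 1/2)² / (π · ℓ! · (ℓ + 1)!) ≤ (1/π) · log(1 + 1/N). (Equivalently, ∑_{ℓ>N} ((1/2)_ℓ)²/(ℓ!(ℓ+1)!) ≤ (1/π)log(1+1/N), where (1/2)_ℓ = Γ(ℓ+1/2)/Γ(1/2) is the Pochhammer symbol.) -/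
lemma gamma_sq_le (x : ℝ) (hx : 0 < x) :
    Real.Gamma (x + 1/2) ^ 2 ≤ Real.Gamma x * Real.Gamma (x + 1) := by
  have hx1 : (0:ℝ) < x + 1 := by linarith
  have h := Real.convexOn_log_Gamma.2 (Set.mem_Ioi.mpr hx) (Set.mem_Ioi.mpr hx1)
    (by norm_num : (0:ℝ) ≤ 1/2) (by norm_num : (0:ℝ) ≤ 1/2) (by norm_num)
  simp only [smul_eq_mul, Function.comp] at h
  have harg : 1/2 * x + 1/2 * (x+1) = x + 1/2 := by ring
  rw [harg] at h
  have hg1 : 0 < Real.Gamma x := Real.Gamma_pos_of_pos hx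
  have hg2 : 0 < Real.Gamma (x+1) := Real.Gamma_pos_of_pos hx1
  have hg3 : 0 < Real.Gamma (x+1/2) := Real.Gamma_pos_of_pos (by linarith)
  have h2 := Real.exp_le_exp.mpr (by linarith :
    2 * Real.log (Real.Gamma (x+1/2)) ≤ Real.log (Real.Gamma x) + Real.log (Real.Gamma (x+1)))
  rwa [Real.exp_add, Real.exp_log hg1, Real.exp_log hg2, two_mul, Real.exp_add,
    Real.exp_log hg3, ← sq] at h2

/-- For `N ≥ 1`: `∑_{ℓ=N+1}^∞ Γ(ℓ+1/2)²/(π ℓ! (ℓ+1)!) ≤ (1/π) log(1 + 1/N)`. -/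
theorem stmt9 (N : ℕ) (hN : 1 ≤ N) :
    ∑' k : ℕ,
        Real.Gamma (((N + 1 + k : ℕ) : ℝ) + 1 / 2) ^ 2 /
          (Real.pi * (Nat.factorial (N + 1 + k) : ℝ) * (Nat.factorial (N + 1 + k + 1) : ℝ)) ≤
      (1 / Real.pi) * Real.log (1 + 1 / (N : ℝ)) := by
  have hπ : 0 < Real.pi := Real.pi_pos
  set f : ℕ → ℝ := fun k =>
    Real.Gamma (((N + 1 + k : ℕ) : ℝ) + 1 / 2) ^ 2 /
      (Real.pi * (Nat.factorial (N + 1 + k) : ℝ) * (Nat.factorial (N + 1 + k + 1) : ℝ)) with hf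
  have hfnn : ∀ k, 0 ≤ f k := by
    intro k
    apply div_nonneg (sq_nonneg _)
    positivity
  have key : ∀ k, f k ≤ (1/Real.pi) * ((fun i : ℕ => 1/((N:ℝ)+1+i)) k - (fun i : ℕ => 1/((N:ℝ)+1+i)) (k+1)) := by
    intro k
    set j := N + k with hj
    have hcast : ((N + 1 + k : ℕ) : ℝ) = (j:ℝ) + 1 := by push_cast [hj]; ring
    have hfac1 : N + 1 + k = j + 1 := by omega
    have hfac2 : N + 1 + k + 1 = j + 2 := by omega
    have hle := gamma_sq_le ((j:ℝ)+1) (by positivity)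
    have hG1 : Real.Gamma ((j:ℝ)+1) = (Nat.factorial j : ℝ) := by
      exact_mod_cast Real.Gamma_nat_eq_factorial j
    have hG2 : Real.Gamma ((j:ℝ)+1+1) = (Nat.factorial (j+1) : ℝ) := by
      have := Real.Gamma_nat_eq_factorial (j+1)
      push_cast at this ⊢
      linarith [this]
    rw [hG1, hG2] at hle
    rw [hf]
    simp only
    rw [hcast, hfac2, hfac1]
    have hd : (0:ℝ) < Real.pi * (Nat.factorial (j+1) : ℝ) * (Nat.factorial (j+2) : ℝ) := by
      positivity
    have step1 : Real.Gamma ((j:ℝ) + 1 + 1/2) ^ 2 /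
        (Real.pi * (Nat.factorial (j+1) : ℝ) * (Nat.factorial (j+2) : ℝ)) ≤
        ((Nat.factorial j : ℝ) * (Nat.factorial (j+1) : ℝ)) /
        (Real.pi * (Nat.factorial (j+1) : ℝ) * (Nat.factorial (j+2) : ℝ)) := by
      gcongr
    refine step1.trans_eq ?_
    have e2 : ((Nat.factorial (j+2) : ℕ) : ℝ) = ((j:ℝ)+2) * ((j:ℝ)+1) * (Nat.factorial j : ℝ) := by
      rw [Nat.factorial_succ, Nat.factorial_succ]
      push_cast
      ring
    have e1 : ((Nat.factorial (j+1) : ℕ) : ℝ) = ((j:ℝ)+1) * (Nat.factorial j : ℝ) := by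
      rw [Nat.factorial_succ]; push_cast; ring
    have hjf : (0:ℝ) < (Nat.factorial j : ℝ) := by positivity
    have hcast2 : (N:ℝ) + 1 + k = (j:ℝ) + 1 := by push_cast [hj]; ring
    have hcast3 : (N:ℝ) + 1 + ((k:ℝ)+1) = (j:ℝ) + 2 := by push_cast [hj]; ring
    push_cast
    rw [hcast2, hcast3, e1, e2]
    field_simp
    ring
  apply Real.tsum_le_of_sum_range_le hfnn
  intro n
  have htel : ∑ k ∈ Finset.range n, (1/Real.pi) * ((fun i : ℕ => 1/((N:ℝ)+1+i)) k - (fun i : ℕ => 1/((N:ℝ)+1+i)) (k+1))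
      = (1/Real.pi) * ((fun i : ℕ => 1/((N:ℝ)+1+i)) 0 - (fun i : ℕ => 1/((N:ℝ)+1+i)) n) := by
    rw [← Finset.mul_sum, Finset.sum_range_sub' (fun i : ℕ => 1/((N:ℝ)+1+i))]
  have hsum : ∑ k ∈ Finset.range n, f k ≤ (1/Real.pi) * ((fun i : ℕ => 1/((N:ℝ)+1+i)) 0 - (fun i : ℕ => 1/((N:ℝ)+1+i)) n) := by
    rw [← htel]
    exact Finset.sum_le_sum fun k _ => key k
  refine hsum.trans ?_
  have h1 : ((fun i : ℕ => 1/((N:ℝ)+1+i)) 0 - (fun i : ℕ => 1/((N:ℝ)+1+i)) n) ≤ 1/((N:ℝ)+1) := by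
    simp only
    have : (0:ℝ) ≤ 1/((N:ℝ)+1+n) := by positivity
    norm_num
    linarith
  have h2 : 1/((N:ℝ)+1) ≤ Real.log (1 + 1/(N:ℝ)) := by
    have hNpos : (0:ℝ) < N := by exact_mod_cast hN
    have hx : (0:ℝ) < 1 + 1/(N:ℝ) := by positivity
    have := Real.one_sub_inv_le_log_of_pos hx
    have hinv : (1 + 1/(N:ℝ))⁻¹ = (N:ℝ)/((N:ℝ)+1) := by
      field_simp
    rw [hinv] at this
    have : 1 - (N:ℝ)/((N:ℝ)+1) = 1/((N:ℝ)+1) := by field_simp; ring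
    linarith [Real.one_sub_inv_le_log_of_pos hx, this]
  calc (1/Real.pi) * ((fun i : ℕ => 1/((N:ℝ)+1+i)) 0 - (fun i : ℕ => 1/((N:ℝ)+1+i)) n)
      ≤ (1/Real.pi) * (1/((N:ℝ)+1)) := by
        apply mul_le_mul_of_nonneg_left h1 (by positivity)
    _ ≤ (1/Real.pi) * Real.log (1 + 1/(N:ℝ)) :=
        mul_le_mul_of_nonneg_left h2 (by positivity)
end

section
/- For all integers m ≥ 2 and J ≥ m + 1: ∑_{i=0}^{2J−m} ((2J − m − i)! · i!) / ((2J − i)! · (i + m)!) ≤ 2 / ((m − 1) · (m − 1)! · (J − 1)(J − 2)⋯(J − m)). -/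
open Finset

/-- Telescoping bound: `∑_{i<N} i!/(i+m)! ≤ 1/((m-1)(m-1)!)`. -/
lemma tele_bound (m : ℕ) (hm : 2 ≤ m) (N : ℕ) :
    ∑ i ∈ Finset.range N, (Nat.factorial i : ℝ) / (Nat.factorial (i + m)) ≤
      1 / (((m : ℝ) - 1) * (Nat.factorial (m - 1))) := by
  set f : ℕ → ℝ := fun i =>
    (Nat.factorial i : ℝ) / (((m : ℝ) - 1) * (Nat.factorial (i + (m - 1)))) with hf
  have hm1 : (1 : ℝ) < (m : ℝ) := by exact_mod_cast Nat.lt_of_lt_of_le one_lt_two hm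
  have hmr : (0 : ℝ) < (m : ℝ) - 1 := by linarith
  have key : ∀ i, (Nat.factorial i : ℝ) / (Nat.factorial (i + m)) = f i - f (i + 1) := by
    intro i
    have h1 : i + (m - 1) + 1 = i + m := by omega
    have h4 : i + 1 + (m - 1) = i + (m - 1) + 1 := by omega
    have h2 : (Nat.factorial (i + m) : ℝ) =
        (i + (m : ℝ)) * (Nat.factorial (i + (m - 1))) := by
      rw [← h1, Nat.factorial_succ]
      push_cast [Nat.cast_sub (show 1 ≤ m by omega)]
      ring
    have h3 : (Nat.factorial (i + 1) : ℝ) = ((i : ℝ) + 1) * Nat.factorial i := by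
      rw [Nat.factorial_succ]; push_cast; ring
    have hfac1 : (0 : ℝ) < (Nat.factorial (i + (m - 1)) : ℝ) := by
      exact_mod_cast (i + (m - 1)).factorial_pos
    have hfac2 : (0 : ℝ) < (Nat.factorial (i + m) : ℝ) := by
      exact_mod_cast (i + m).factorial_pos
    simp only [hf]
    rw [h4, h1, h2, h3]
    field_simp
    ring
  have hsum : ∑ i ∈ Finset.range N, (Nat.factorial i : ℝ) / (Nat.factorial (i + m)) =
      f 0 - f N := by
    rw [← Finset.sum_range_sub' f N]
    exact Finset.sum_congr rfl fun i _ => key i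
  have hf0 : f 0 = 1 / (((m : ℝ) - 1) * (Nat.factorial (m - 1))) := by
    simp [hf]
  have hfN : 0 ≤ f N := by
    apply div_nonneg (by positivity)
    have : (0 : ℝ) < (Nat.factorial (N + (m - 1)) : ℝ) := by
      exact_mod_cast (N + (m - 1)).factorial_pos
    positivity
  rw [hsum, hf0]; linarith

/-- The product `(J-1)⋯(J-m)` is positive. -/
lemma prod_pos13 (m J : ℕ) (hJ : m + 1 ≤ J) :
    0 < ∏ k ∈ Finset.Icc 1 m, ((J : ℝ) - k) := by
  apply Finset.prod_pos
  intro k hk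
  simp only [Finset.mem_Icc] at hk
  have : (k : ℝ) < J := by exact_mod_cast Nat.lt_of_lt_of_le (by omega) hJ
  linarith

/-- Pointwise bound for `i ≤ J`. -/
lemma point_bound (m J i : ℕ) (hm : 2 ≤ m) (hJ : m + 1 ≤ J) (hi : i ≤ J) :
    (Nat.factorial (2 * J - m - i) : ℝ) * (Nat.factorial i) /
        ((Nat.factorial (2 * J - i) : ℝ) * (Nat.factorial (i + m))) ≤
      ((Nat.factorial i : ℝ) / (Nat.factorial (i + m))) /
        ∏ k ∈ Finset.Icc 1 m, ((J : ℝ) - k) := by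
  have hP : 0 < ∏ k ∈ Finset.Icc 1 m, ((J : ℝ) - k) := prod_pos13 m J hJ
  have hmJ : m ≤ 2 * J - i := by omega
  have hfac : (Nat.factorial (2 * J - i - m)) * ((2 * J - i).descFactorial m)
      = Nat.factorial (2 * J - i) := Nat.factorial_mul_descFactorial hmJ
  have heq : 2 * J - m - i = 2 * J - i - m := by omega
  have himg : Finset.Icc 1 m = Finset.image (fun j => j + 1) (Finset.range m) := by
    ext x
    simp only [Finset.mem_Icc, Finset.mem_image, Finset.mem_range]
    constructor
    · rintro ⟨h1, h2⟩
      exact ⟨x - 1, by omega, by omega⟩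
    · rintro ⟨a, ha, rfl⟩
      omega
  have hinj : ∀ x ∈ Finset.range m, ∀ y ∈ Finset.range m,
      (fun j => j + 1) x = (fun j => j + 1) y → x = y := by
    intro a _ b _ h
    simpa using h
  have hPle : (∏ k ∈ Finset.Icc 1 m, ((J : ℝ) - k)) ≤ ((2 * J - i).descFactorial m : ℝ) := by
    rw [Nat.descFactorial_eq_prod_range, himg, Finset.prod_image hinj]
    push_cast
    apply Finset.prod_le_prod
    · intro j hj
      simp only [Finset.mem_range] at hj
      have hj1 : ((j : ℝ) + 1) < J := by
        have : j + 1 < J := by omega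
        exact_mod_cast this
      push_cast
      linarith
    · intro j hj
      simp only [Finset.mem_range] at hj
      have h2 : ((2 * J - i - j : ℕ) : ℝ) = 2 * (J : ℝ) - i - j := by
        have hij : j + i ≤ 2 * J := by omega
        push_cast [Nat.cast_sub (show j ≤ 2 * J - i by omega),
          Nat.cast_sub (show i ≤ 2 * J by omega)]
        ring
      have h4 : (i : ℝ) ≤ J := by exact_mod_cast hi
      have h5 : (j : ℝ) < m := by exact_mod_cast hj
      push_cast
      rw [h2]
      push_cast
      linarith
  have hD : (0 : ℝ) < ((2 * J - i).descFactorial m : ℝ) := lt_of_lt_of_le hP hPle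
  rw [heq]
  have hfacR : (Nat.factorial (2 * J - i) : ℝ)
      = (Nat.factorial (2 * J - i - m) : ℝ) * ((2 * J - i).descFactorial m : ℝ) := by
    exact_mod_cast hfac.symm
  have hfp1 : (0 : ℝ) < (Nat.factorial (2 * J - i - m) : ℝ) := by
    exact_mod_cast (2 * J - i - m).factorial_pos
  have hfp2 : (0 : ℝ) < (Nat.factorial (i + m) : ℝ) := by
    exact_mod_cast (i + m).factorial_pos
  have hfp3 : (0 : ℝ) < (Nat.factorial i : ℝ) := by exact_mod_cast i.factorial_pos
  rw [hfacR, div_div]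
  rw [div_le_div_iff₀ (by positivity) (by positivity)]
  calc (Nat.factorial (2 * J - i - m) : ℝ) * (Nat.factorial i) *
      ((Nat.factorial (i + m)) * ∏ k ∈ Finset.Icc 1 m, ((J : ℝ) - k)) ≤
      (Nat.factorial (2 * J - i - m) : ℝ) * (Nat.factorial i) *
      ((Nat.factorial (i + m)) * ((2 * J - i).descFactorial m : ℝ)) := by
        apply mul_le_mul_of_nonneg_left
        · exact mul_le_mul_of_nonneg_left hPle hfp2.le
        · positivity
    _ = (Nat.factorial i : ℝ) *
        ((Nat.factorial (2 * J - i - m) : ℝ) * ((2 * J - i).descFactorial m : ℝ) *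
          (Nat.factorial (i + m))) := by ring

/-- For `m ≥ 2` and `J ≥ m+1`:
`∑_{i=0}^{2J-m} (2J-m-i)! i! / ((2J-i)! (i+m)!) ≤ 2/((m-1)(m-1)! (J-1)(J-2)⋯(J-m))`. -/
theorem stmt13 (m J : ℕ) (hm : 2 ≤ m) (hJ : m + 1 ≤ J) :
    ∑ i ∈ Finset.range (2 * J - m + 1),
        (Nat.factorial (2 * J - m - i) : ℝ) * (Nat.factorial i) /
          ((Nat.factorial (2 * J - i) : ℝ) * (Nat.factorial (i + m))) ≤
      2 / (((m : ℝ) - 1) * (Nat.factorial (m - 1) : ℝ) *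
        ∏ k ∈ Finset.Icc 1 m, ((J : ℝ) - k)) := by
  have hP : 0 < ∏ k ∈ Finset.Icc 1 m, ((J : ℝ) - k) := prod_pos13 m J hJ
  have hm1 : (1 : ℝ) < (m : ℝ) := by exact_mod_cast Nat.lt_of_lt_of_le one_lt_two hm
  have hmr : (0 : ℝ) < (m : ℝ) - 1 := by linarith
  have hfacm : (0 : ℝ) < (Nat.factorial (m - 1) : ℝ) := by
    exact_mod_cast (m - 1).factorial_pos
  have hC : (0:ℝ) ≤ 1 / (((m : ℝ) - 1) * (Nat.factorial (m - 1))) := by positivity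
  -- split the sum
  have hsplit : Finset.range (2 * J - m + 1) =
      Finset.range (J + 1) ∪ Finset.Ico (J + 1) (2 * J - m + 1) := by
    rw [Finset.range_eq_Ico, Finset.range_eq_Ico,
      Finset.Ico_union_Ico_eq_Ico (show 0 ≤ J + 1 by omega) (show J + 1 ≤ 2 * J - m + 1 by omega),
      ← Finset.range_eq_Ico]
  have hdisj : Disjoint (Finset.range (J + 1)) (Finset.Ico (J + 1) (2 * J - m + 1)) := by
    rw [Finset.range_eq_Ico]
    exact Finset.Ico_disjoint_Ico_consecutive 0 (J + 1) (2 * J - m + 1)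
  rw [hsplit, Finset.sum_union hdisj]
  -- bound first part
  have hbd1 : ∑ i ∈ Finset.range (J + 1),
      (Nat.factorial (2 * J - m - i) : ℝ) * (Nat.factorial i) /
        ((Nat.factorial (2 * J - i) : ℝ) * (Nat.factorial (i + m))) ≤
      (1 / (((m : ℝ) - 1) * (Nat.factorial (m - 1)))) /
        ∏ k ∈ Finset.Icc 1 m, ((J : ℝ) - k) := by
    calc ∑ i ∈ Finset.range (J + 1),
        (Nat.factorial (2 * J - m - i) : ℝ) * (Nat.factorial i) /
          ((Nat.factorial (2 * J - i) : ℝ) * (Nat.factorial (i + m)))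
        ≤ ∑ i ∈ Finset.range (J + 1),
          ((Nat.factorial i : ℝ) / (Nat.factorial (i + m))) /
            ∏ k ∈ Finset.Icc 1 m, ((J : ℝ) - k) := by
          apply Finset.sum_le_sum
          intro i hi
          simp only [Finset.mem_range] at hi
          exact point_bound m J i hm hJ (by omega)
      _ = (∑ i ∈ Finset.range (J + 1),
          (Nat.factorial i : ℝ) / (Nat.factorial (i + m))) /
            ∏ k ∈ Finset.Icc 1 m, ((J : ℝ) - k) := by
          rw [Finset.sum_div]
      _ ≤ _ := by
          gcongr
          exact tele_bound m hm (J + 1)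
  -- bound second part
  have hbd2 : ∑ i ∈ Finset.Ico (J + 1) (2 * J - m + 1),
      (Nat.factorial (2 * J - m - i) : ℝ) * (Nat.factorial i) /
        ((Nat.factorial (2 * J - i) : ℝ) * (Nat.factorial (i + m))) ≤
      (1 / (((m : ℝ) - 1) * (Nat.factorial (m - 1)))) /
        ∏ k ∈ Finset.Icc 1 m, ((J : ℝ) - k) := by
    have step1 : ∀ i ∈ Finset.Ico (J + 1) (2 * J - m + 1),
        (Nat.factorial (2 * J - m - i) : ℝ) * (Nat.factorial i) /
          ((Nat.factorial (2 * J - i) : ℝ) * (Nat.factorial (i + m))) ≤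
        ((Nat.factorial (2 * J - m - i) : ℝ) / (Nat.factorial (2 * J - m - i + m))) /
          ∏ k ∈ Finset.Icc 1 m, ((J : ℝ) - k) := by
      intro i hi
      simp only [Finset.mem_Ico] at hi
      obtain ⟨j, hj1, hj3⟩ : ∃ j, 2 * J - m - i = j ∧ 2 * J - i = j + m :=
        ⟨2 * J - m - i, rfl, by omega⟩
      rw [hj1, hj3]
      have hthis := point_bound m J j hm hJ (by omega)
      rw [show 2 * J - m - j = i by omega, show 2 * J - j = i + m by omega] at hthis
      have heqL : (Nat.factorial j : ℝ) * (Nat.factorial i) /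
          ((Nat.factorial (j + m) : ℝ) * (Nat.factorial (i + m))) =
          (Nat.factorial i : ℝ) * (Nat.factorial j) /
          ((Nat.factorial (i + m) : ℝ) * (Nat.factorial (j + m))) := by ring
      rw [heqL]
      exact hthis
    calc ∑ i ∈ Finset.Ico (J + 1) (2 * J - m + 1),
        (Nat.factorial (2 * J - m - i) : ℝ) * (Nat.factorial i) /
          ((Nat.factorial (2 * J - i) : ℝ) * (Nat.factorial (i + m)))
        ≤ ∑ i ∈ Finset.Ico (J + 1) (2 * J - m + 1),
          ((Nat.factorial (2 * J - m - i) : ℝ) / (Nat.factorial (2 * J - m - i + m))) /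
            ∏ k ∈ Finset.Icc 1 m, ((J : ℝ) - k) :=
          Finset.sum_le_sum step1
      _ = (∑ i ∈ Finset.Ico (J + 1) (2 * J - m + 1),
          (Nat.factorial (2 * J - m - i) : ℝ) / (Nat.factorial (2 * J - m - i + m))) /
            ∏ k ∈ Finset.Icc 1 m, ((J : ℝ) - k) := by
          rw [Finset.sum_div]
      _ ≤ _ := by
          gcongr
          rw [Finset.sum_Ico_eq_sum_range]
          have hlen : 2 * J - m + 1 - (J + 1) = J - m := by omega
          rw [hlen]
          have hre : ∀ t ∈ Finset.range (J - m),
              (Nat.factorial (2 * J - m - (J + 1 + t)) : ℝ) /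
                (Nat.factorial (2 * J - m - (J + 1 + t) + m)) =
              (Nat.factorial (J - m - 1 - t) : ℝ) / (Nat.factorial (J - m - 1 - t + m)) := by
            intro t ht
            simp only [Finset.mem_range] at ht
            rw [show 2 * J - m - (J + 1 + t) = J - m - 1 - t by omega]
          rw [Finset.sum_congr rfl hre,
            Finset.sum_range_reflect (fun j => (Nat.factorial j : ℝ) / (Nat.factorial (j + m)))
              (J - m)]
          exact tele_bound m hm (J - m)
  have hfinal : (1 / (((m : ℝ) - 1) * (Nat.factorial (m - 1)))) /
        (∏ k ∈ Finset.Icc 1 m, ((J : ℝ) - k)) +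
      (1 / (((m : ℝ) - 1) * (Nat.factorial (m - 1)))) /
        (∏ k ∈ Finset.Icc 1 m, ((J : ℝ) - k)) =
      2 / (((m : ℝ) - 1) * (Nat.factorial (m - 1) : ℝ) *
        ∏ k ∈ Finset.Icc 1 m, ((J : ℝ) - k)) := by
    field_simp
    ring
  linarith [hbd1, hbd2, hfinal]
end

section
/- Let N ≥ 1, let A and B be Hermitian N × N complex matrices all of whose eigenvalues lie in an interval [a, b], let 0 < α ≤ 1, and let φ : [a, b] → ℝ satisfy |φ(x) − φ(y)| ≤ H·|x − y|^α for all x, y ∈ [a, b]. Then |Tr φ(A) − Tr φ(B)| ≤ H · ‖A − B‖₁^α · N^{1−α}, where Tr φ(A) = ∑_{i=1}^{N} φ(λ_i(A)) with λ_i(A) the eigenvalues of A (counted with multiplicity), and ‖A − B‖₁ is the trace norm of A − B, i.e. the sum of the absolute values of the eigenvalues of the Hermitian matrix A − B. -/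
open Matrix
open scoped ComplexOrder

noncomputable def quadF {N : ℕ} (M : Matrix (Fin N) (Fin N) ℂ) (x : EuclideanSpace ℂ (Fin N)) : ℝ :=
  RCLike.re (inner ℂ x (Matrix.toEuclideanLin M x) : ℂ)

lemma quadF_nonneg {N : ℕ} {M : Matrix (Fin N) (Fin N) ℂ} (hM : M.PosSemidef)
    (x : EuclideanSpace ℂ (Fin N)) : 0 ≤ quadF M x := by
  have := hM.re_dotProduct_nonneg ((WithLp.equiv 2 _) x)
  convert this using 2
  simp [quadF, EuclideanSpace.inner_eq_star_dotProduct, dotProduct_comm]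

lemma quadF_sub {N : ℕ} (M₁ M₂ : Matrix (Fin N) (Fin N) ℂ) (x : EuclideanSpace ℂ (Fin N)) :
    quadF (M₁ - M₂) x = quadF M₁ x - quadF M₂ x := by
  simp [quadF, inner_sub_right, map_sub]

lemma quadF_eq {N : ℕ} {M : Matrix (Fin N) (Fin N) ℂ} (hM : M.IsHermitian)
    (x : EuclideanSpace ℂ (Fin N)) :
    quadF M x = ∑ i, hM.eigenvalues i * ‖hM.eigenvectorBasis.repr x i‖ ^ 2 := by
  set b := hM.eigenvectorBasis
  have hT : ∀ j, Matrix.toEuclideanLin M (b j) = (hM.eigenvalues j : ℂ) • b j := by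
    intro j
    apply (WithLp.equiv 2 _).injective
    rw [WithLp.equiv_apply, Matrix.ofLp_toEuclideanLin_apply]
    have h1 : (WithLp.equiv 2 _) (b j) = ⇑(b j) := rfl
    rw [hM.mulVec_eigenvectorBasis j, RCLike.real_smul_eq_coe_smul (K := ℂ)]
    rfl
  have hx : Matrix.toEuclideanLin M x = ∑ j, b.repr x j • ((hM.eigenvalues j : ℂ) • b j) := by
    conv_lhs => rw [← b.sum_repr x]
    rw [map_sum]
    exact Finset.sum_congr rfl fun j _ => by rw [_root_.map_smul, hT j]
  rw [quadF, hx, inner_sum]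
  rw [map_sum]
  congr 1
  ext j
  rw [inner_smul_right, inner_smul_right]
  have h2 : (inner ℂ x (b j) : ℂ) = starRingEnd ℂ (b.repr x j) := by
    rw [b.repr_apply_apply, inner_conj_symm]
  rw [h2]
  have h3 : b.repr x j * ((hM.eigenvalues j : ℂ) * starRingEnd ℂ (b.repr x j)) =
      (hM.eigenvalues j : ℂ) * (b.repr x j * starRingEnd ℂ (b.repr x j)) := by ring
  rw [h3, RCLike.mul_conj]
  simp [← Complex.ofReal_pow]

lemma normsq_eq {N : ℕ} {M : Matrix (Fin N) (Fin N) ℂ} (hM : M.IsHermitian)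
    (x : EuclideanSpace ℂ (Fin N)) :
    ‖x‖ ^ 2 = ∑ i, ‖hM.eigenvectorBasis.repr x i‖ ^ 2 := by
  rw [← hM.eigenvectorBasis.repr.norm_map x, EuclideanSpace.norm_eq,
    Real.sq_sqrt (by positivity)]
open Matrix

-- repr vanishes outside the spanning set
lemma repr_eq_zero_of_mem_span {N : ℕ} (b : OrthonormalBasis (Fin N) ℂ (EuclideanSpace ℂ (Fin N)))
    (s : Finset (Fin N)) {x : EuclideanSpace ℂ (Fin N)}
    (hx : x ∈ Submodule.span ℂ (b '' (s : Set (Fin N)))) {i : Fin N} (hi : i ∉ s) :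
    b.repr x i = 0 := by
  rw [b.repr_apply_apply]
  have : Submodule.span ℂ (b '' (s : Set (Fin N))) ≤ LinearMap.ker (innerSL ℂ (b i) : EuclideanSpace ℂ (Fin N) →ₗ[ℂ] ℂ) := by
    rw [Submodule.span_le]
    rintro _ ⟨j, hj, rfl⟩
    simp only [SetLike.mem_coe, LinearMap.mem_ker, ContinuousLinearMap.coe_coe, innerSL_apply_apply]
    exact b.orthonormal.2 (fun h => hi (h ▸ hj))
  simpa using this hx

lemma finrank_span_orthonormal {N : ℕ}
    (b : OrthonormalBasis (Fin N) ℂ (EuclideanSpace ℂ (Fin N))) (s : Finset (Fin N)) :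
    Module.finrank ℂ (Submodule.span ℂ (b '' (s : Set (Fin N)))) = s.card := by
  have li : LinearIndependent ℂ (fun j : (s : Set (Fin N)) => b j) :=
    b.orthonormal.linearIndependent.comp _ Subtype.val_injective
  have := finrank_span_eq_card li
  rw [← Set.image_eq_range] at this
  rw [this]
  simp

open scoped ComplexOrder in
lemma weyl_mono {N : ℕ} {A B : Matrix (Fin N) (Fin N) ℂ} (hA : A.IsHermitian) (hB : B.IsHermitian)
    (h : (B - A).PosSemidef) (k : Fin N) :
    (hA.eigenvalues ∘ Tuple.sort hA.eigenvalues) k ≤ (hB.eigenvalues ∘ Tuple.sort hB.eigenvalues) k := by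
  set p := Tuple.sort hA.eigenvalues with hp
  set q := Tuple.sort hB.eigenvalues with hq
  set sB : Finset (Fin N) := (Finset.Iic k).image q with hsB
  set sA : Finset (Fin N) := (Finset.Ici k).image p with hsA
  set S := Submodule.span ℂ (hB.eigenvectorBasis '' (sB : Set (Fin N))) with hS
  set T := Submodule.span ℂ (hA.eigenvectorBasis '' (sA : Set (Fin N))) with hT
  have hcardB : sB.card = k.val + 1 := by
    rw [hsB, Finset.card_image_of_injective _ q.injective]; simp
  have hcardA : sA.card = N - k.val := by
    rw [hsA, Finset.card_image_of_injective _ p.injective]; simp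
  have hfS : Module.finrank ℂ S = k.val + 1 := by rw [hS, finrank_span_orthonormal, hcardB]
  have hfT : Module.finrank ℂ T = N - k.val := by rw [hT, finrank_span_orthonormal, hcardA]
  have hbot : S ⊓ T ≠ ⊥ := by
    intro hb
    have h1 := Submodule.finrank_sup_add_finrank_inf_eq S T
    have h2 : Module.finrank ℂ ↥(S ⊔ T) ≤ N := by
      have := Submodule.finrank_le (S ⊔ T)
      simpa using this
    rw [hb, finrank_bot, add_zero, hfS, hfT] at h1
    omega
  obtain ⟨x, hxmem, hxne'⟩ := Submodule.exists_mem_ne_zero_of_ne_bot hbot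
  obtain ⟨hxS, hxT⟩ := Submodule.mem_inf.mp hxmem
  have hnorm : (0:ℝ) < ‖x‖ ^ 2 := pow_pos (norm_pos_iff.mpr hxne') 2
  -- lower bound for A
  have hlowA : (hA.eigenvalues ∘ p) k * ‖x‖ ^ 2 ≤ quadF A x := by
    rw [quadF_eq hA, normsq_eq hA x, Finset.mul_sum]
    apply Finset.sum_le_sum
    intro i _
    by_cases hi : i ∈ sA
    · obtain ⟨j, hj, rfl⟩ := Finset.mem_image.mp hi
      have : (hA.eigenvalues ∘ p) k ≤ hA.eigenvalues (p j) :=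
        Tuple.monotone_sort hA.eigenvalues (Finset.mem_Ici.mp hj)
      exact mul_le_mul_of_nonneg_right this (by positivity)
    · rw [repr_eq_zero_of_mem_span hA.eigenvectorBasis sA hxT hi]
      simp
  have hupB : quadF B x ≤ (hB.eigenvalues ∘ q) k * ‖x‖ ^ 2 := by
    rw [quadF_eq hB, normsq_eq hB x, Finset.mul_sum]
    apply Finset.sum_le_sum
    intro i _
    by_cases hi : i ∈ sB
    · obtain ⟨j, hj, rfl⟩ := Finset.mem_image.mp hi
      have : hB.eigenvalues (q j) ≤ (hB.eigenvalues ∘ q) k :=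
        Tuple.monotone_sort hB.eigenvalues (Finset.mem_Iic.mp hj)
      exact mul_le_mul_of_nonneg_right this (by positivity)
    · rw [repr_eq_zero_of_mem_span hB.eigenvectorBasis sB hxS hi]
      simp
  have hAB : quadF A x ≤ quadF B x := by
    have := quadF_nonneg h x
    rw [quadF_sub] at this
    linarith
  have := hlowA.trans (hAB.trans hupB)
  exact le_of_mul_le_mul_right this hnorm

lemma trace_unitary_conj {N : ℕ} (V : Matrix.unitaryGroup (Fin N) ℂ) (d : Fin N → ℝ) :
    Matrix.trace ((V : Matrix (Fin N) (Fin N) ℂ) * Matrix.diagonal (RCLike.ofReal ∘ d)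
      * star (V : Matrix (Fin N) (Fin N) ℂ)) = ((∑ i, d i : ℝ) : ℂ) := by
  rw [Matrix.trace_mul_cycle]
  rw [Unitary.coe_star_mul_self, Matrix.one_mul, Matrix.trace_diagonal]
  push_cast
  rfl

lemma sum_eigenvalues_eq_trace' {N : ℕ} {M : Matrix (Fin N) (Fin N) ℂ} (hM : M.IsHermitian) :
    ((∑ i, hM.eigenvalues i : ℝ) : ℂ) = Matrix.trace M := by
  conv_rhs => rw [hM.spectral_theorem]
  rw [Unitary.conjStarAlgAut_apply, trace_unitary_conj]

open scoped ComplexOrder in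
lemma lidskii {N : ℕ} {A B : Matrix (Fin N) (Fin N) ℂ} (hA : A.IsHermitian) (hB : B.IsHermitian)
    (hC : (A - B).IsHermitian) :
    ∑ k, |(hA.eigenvalues ∘ Tuple.sort hA.eigenvalues) k
        - (hB.eigenvalues ∘ Tuple.sort hB.eigenvalues) k|
      ≤ ∑ i, |hC.eigenvalues i| := by
  set c := hC.eigenvalues with hc
  set V := hC.eigenvectorUnitary with hV
  set Cp : Matrix (Fin N) (Fin N) ℂ :=
    (V : Matrix (Fin N) (Fin N) ℂ) * Matrix.diagonal (RCLike.ofReal ∘ fun i => max (c i) 0)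
      * star (V : Matrix (Fin N) (Fin N) ℂ) with hCpdef
  set Cm : Matrix (Fin N) (Fin N) ℂ :=
    (V : Matrix (Fin N) (Fin N) ℂ) * Matrix.diagonal (RCLike.ofReal ∘ fun i => max (-c i) 0)
      * star (V : Matrix (Fin N) (Fin N) ℂ) with hCmdef
  have hCp : Cp.PosSemidef := by
    rw [hCpdef, Matrix.star_eq_conjTranspose]
    exact (Matrix.posSemidef_diagonal_iff.mpr fun i => by
      simpa using RCLike.ofReal_nonneg.mpr (le_max_right (c i) 0)).mul_mul_conjTranspose_same _
  have hCm : Cm.PosSemidef := by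
    rw [hCmdef, Matrix.star_eq_conjTranspose]
    exact (Matrix.posSemidef_diagonal_iff.mpr fun i => by
      simpa using RCLike.ofReal_nonneg.mpr (le_max_right (-c i) 0)).mul_mul_conjTranspose_same _
  have hsub : Cp - Cm = A - B := by
    rw [hCpdef, hCmdef, ← Matrix.sub_mul, ← Matrix.mul_sub]
    have hd : (Matrix.diagonal (RCLike.ofReal ∘ fun i => max (c i) 0)
        - Matrix.diagonal (RCLike.ofReal ∘ fun i => max (-c i) 0) : Matrix (Fin N) (Fin N) ℂ)
        = Matrix.diagonal (RCLike.ofReal ∘ c) := by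
      rw [Matrix.diagonal_sub]
      exact congrArg Matrix.diagonal (funext fun i => by
        simp only [Pi.sub_apply, Function.comp_apply]
        rw [← RCLike.ofReal_sub, max_zero_sub_max_neg_zero_eq_self])
    rw [hd]
    exact hC.spectral_theorem.symm
  -- D and E
  set D := B + Cp with hDdef
  set E := A + Cm with hEdef
  have hD : D.IsHermitian := hB.add hCp.1
  have hE : E.IsHermitian := hA.add hCm.1
  have hDA : (D - A).PosSemidef := by
    have : D - A = Cm := by
      calc D - A = Cp - (A - B) := by rw [hDdef]; abel
        _ = Cp - (Cp - Cm) := by rw [hsub]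
        _ = Cm := by abel
    rwa [this]
  have hDB : (D - B).PosSemidef := by
    have : D - B = Cp := by rw [hDdef]; abel
    rwa [this]
  have hEB : (E - B).PosSemidef := by
    have : E - B = Cp := by
      calc E - B = Cm + (A - B) := by rw [hEdef]; abel
        _ = Cm + (Cp - Cm) := by rw [hsub]
        _ = Cp := by abel
    rwa [this]
  have hEA : (E - A).PosSemidef := by
    have : E - A = Cm := by rw [hEdef]; abel
    rwa [this]
  have w1 := weyl_mono hA hD hDA
  have w2 := weyl_mono hB hD hDB
  have w3 := weyl_mono hB hE hEB
  have w4 := weyl_mono hA hE hEA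
  -- trace identities
  have trCp : Matrix.trace Cp = ((∑ i, max (c i) 0 : ℝ) : ℂ) := trace_unitary_conj V _
  have trCm : Matrix.trace Cm = ((∑ i, max (-c i) 0 : ℝ) : ℂ) := trace_unitary_conj V _
  have tD : (∑ k, hD.eigenvalues k) = (∑ k, hB.eigenvalues k) + ∑ i, max (c i) 0 := by
    have h1 : ((∑ k, hD.eigenvalues k : ℝ) : ℂ)
        = ((∑ k, hB.eigenvalues k : ℝ) : ℂ) + ((∑ i, max (c i) 0 : ℝ) : ℂ) := by
      rw [sum_eigenvalues_eq_trace' hD, hDdef, Matrix.trace_add,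
        sum_eigenvalues_eq_trace' hB, trCp]
    exact_mod_cast h1
  have tE : (∑ k, hE.eigenvalues k) = (∑ k, hA.eigenvalues k) + ∑ i, max (-c i) 0 := by
    have h1 : ((∑ k, hE.eigenvalues k : ℝ) : ℂ)
        = ((∑ k, hA.eigenvalues k : ℝ) : ℂ) + ((∑ i, max (-c i) 0 : ℝ) : ℂ) := by
      rw [sum_eigenvalues_eq_trace' hE, hEdef, Matrix.trace_add,
        sum_eigenvalues_eq_trace' hA, trCm]
    exact_mod_cast h1
  -- pointwise bound and sum
  have key : ∀ k, |(hA.eigenvalues ∘ Tuple.sort hA.eigenvalues) k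
        - (hB.eigenvalues ∘ Tuple.sort hB.eigenvalues) k|
      ≤ ((hD.eigenvalues ∘ Tuple.sort hD.eigenvalues) k
          - (hB.eigenvalues ∘ Tuple.sort hB.eigenvalues) k)
        + ((hE.eigenvalues ∘ Tuple.sort hE.eigenvalues) k
          - (hA.eigenvalues ∘ Tuple.sort hA.eigenvalues) k) := by
    intro k
    have h1 := w1 k; have h2 := w2 k; have h3 := w3 k; have h4 := w4 k
    rw [abs_le]
    constructor <;> [skip; skip] <;> nlinarith [h1, h2, h3, h4]
  calc ∑ k, |(hA.eigenvalues ∘ Tuple.sort hA.eigenvalues) k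
        - (hB.eigenvalues ∘ Tuple.sort hB.eigenvalues) k|
      ≤ ∑ k, (((hD.eigenvalues ∘ Tuple.sort hD.eigenvalues) k
          - (hB.eigenvalues ∘ Tuple.sort hB.eigenvalues) k)
        + ((hE.eigenvalues ∘ Tuple.sort hE.eigenvalues) k
          - (hA.eigenvalues ∘ Tuple.sort hA.eigenvalues) k)) :=
        Finset.sum_le_sum fun k _ => key k
    _ = ((∑ k, hD.eigenvalues k) - ∑ k, hB.eigenvalues k)
        + ((∑ k, hE.eigenvalues k) - ∑ k, hA.eigenvalues k) := by
        rw [Finset.sum_add_distrib, Finset.sum_sub_distrib, Finset.sum_sub_distrib]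
        simp only [Function.comp]
        rw [Equiv.sum_comp (Tuple.sort hD.eigenvalues) hD.eigenvalues,
          Equiv.sum_comp (Tuple.sort hB.eigenvalues) hB.eigenvalues,
          Equiv.sum_comp (Tuple.sort hE.eigenvalues) hE.eigenvalues,
          Equiv.sum_comp (Tuple.sort hA.eigenvalues) hA.eigenvalues]
    _ = (∑ i, max (c i) 0) + ∑ i, max (-c i) 0 := by rw [tD, tE]; ring
    _ = ∑ i, |c i| := by
        rw [← Finset.sum_add_distrib]
        exact Finset.sum_congr rfl fun i _ => max_zero_add_max_neg_zero_eq_abs_self (c i)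


lemma sum_rpow_le {N : ℕ} (hN : 1 ≤ N) (δ : Fin N → ℝ) (hδ : ∀ i, 0 ≤ δ i)
    (α : ℝ) (hα0 : 0 < α) (hα1 : α ≤ 1) :
    ∑ i, δ i ^ α ≤ (∑ i, δ i) ^ α * (N : ℝ) ^ (1 - α) := by
  have hNpos : (0:ℝ) < N := by exact_mod_cast hN
  have hp : (1:ℝ) ≤ 1 / α := by rw [le_div_iff₀ hα0]; linarith
  have key := Real.arith_mean_le_rpow_mean Finset.univ (fun _ => 1 / (N:ℝ))
    (fun i => δ i ^ α) (fun i _ => by positivity)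
    (by rw [Finset.sum_const]; simp; field_simp)
    (fun i _ => Real.rpow_nonneg (hδ i) α) hp
  have hz : ∀ i, (δ i ^ α) ^ (1/α) = δ i := fun i => by
    rw [← Real.rpow_mul (hδ i), mul_one_div, div_self (ne_of_gt hα0), Real.rpow_one]
  have hinv : 1 / (1/α) = α := by field_simp
  rw [hinv] at key
  simp only [hz] at key
  rw [← Finset.mul_sum, ← Finset.mul_sum] at key
  -- key : (1/N) * ∑ δ^α ≤ ((1/N) * ∑ δ) ^ α
  have hS : 0 ≤ ∑ i, δ i := Finset.sum_nonneg fun i _ => hδ i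
  have h2 : ((1/(N:ℝ)) * ∑ i, δ i) ^ α = (1/(N:ℝ)) ^ α * (∑ i, δ i) ^ α :=
    Real.mul_rpow (by positivity) hS
  rw [h2] at key
  have h3 : ∑ i, δ i ^ α ≤ (N:ℝ) * ((1/(N:ℝ)) ^ α * (∑ i, δ i) ^ α) := by
    calc ∑ i, δ i ^ α = (N:ℝ) * ((1/(N:ℝ)) * ∑ i, δ i ^ α) := by field_simp
      _ ≤ (N:ℝ) * ((1/(N:ℝ)) ^ α * (∑ i, δ i) ^ α) :=
        mul_le_mul_of_nonneg_left key (le_of_lt hNpos)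
  refine h3.trans (le_of_eq ?_)
  have hpow : (N:ℝ) * (1/(N:ℝ)) ^ α = (N:ℝ) ^ (1 - α) := by
    rw [one_div, ← Real.rpow_neg_one (N:ℝ), ← Real.rpow_mul hNpos.le]
    nth_rewrite 1 [← Real.rpow_one (N:ℝ)]
    rw [← Real.rpow_add hNpos]
    norm_num
    rw [← sub_eq_add_neg]
  calc (N:ℝ) * ((1/(N:ℝ)) ^ α * (∑ i, δ i) ^ α)
      = ((N:ℝ) * (1/(N:ℝ)) ^ α) * (∑ i, δ i) ^ α := by ring
    _ = (N:ℝ) ^ (1 - α) * (∑ i, δ i) ^ α := by rw [hpow]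
    _ = (∑ i, δ i) ^ α * (N:ℝ) ^ (1 - α) := by ring

lemma herm_eq_smul_one {N : ℕ} {A : Matrix (Fin N) (Fin N) ℂ} (hA : A.IsHermitian) (a : ℝ)
    (h : ∀ i, hA.eigenvalues i = a) : A = (a : ℂ) • (1 : Matrix (Fin N) (Fin N) ℂ) := by
  conv_lhs => rw [hA.spectral_theorem]
  have hd : Matrix.diagonal (RCLike.ofReal ∘ hA.eigenvalues)
      = (a : ℂ) • (1 : Matrix (Fin N) (Fin N) ℂ) := by
    rw [Matrix.smul_one_eq_diagonal]
    exact congrArg Matrix.diagonal (funext fun i => by simp [h i])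
  rw [Unitary.conjStarAlgAut_apply, hd, Matrix.mul_smul, Matrix.smul_mul, Matrix.mul_one]
  congr 1
  rw [← Unitary.coe_star]
  exact Unitary.coe_mul_star_self _

lemma eig_zero_of_zero {N : ℕ} {C : Matrix (Fin N) (Fin N) ℂ} (hC : C.IsHermitian)
    (h : C = 0) (i : Fin N) : hC.eigenvalues i = 0 := by
  subst h
  have hm := hC.mulVec_eigenvectorBasis i
  rw [Matrix.zero_mulVec] at hm
  rcases smul_eq_zero.mp hm.symm with h0 | h0
  · exact h0
  · exfalso
    apply hC.eigenvectorBasis.orthonormal.ne_zero i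
    ext j
    exact congrFun h0 j

/-- Trace bound for Hölder functions of Hermitian matrices:
if `A, B` are Hermitian `N × N` matrices with spectra in `[a,b]` and `φ` is `α`-Hölder
with constant `H` on `[a,b]`, then
`|Tr φ(A) - Tr φ(B)| ≤ H ‖A - B‖₁^α N^{1-α}`, where traces of `φ` are sums of `φ` over
eigenvalues and `‖A - B‖₁` is the sum of the absolute values of the eigenvalues of `A - B`. -/
theorem stmt18 (N : ℕ) (hN : 1 ≤ N) (A B : Matrix (Fin N) (Fin N) ℂ)
    (hA : A.IsHermitian) (hB : B.IsHermitian) (hAB : (A - B).IsHermitian)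
    (a b : ℝ)
    (hAspec : ∀ i, hA.eigenvalues i ∈ Set.Icc a b)
    (hBspec : ∀ i, hB.eigenvalues i ∈ Set.Icc a b)
    (α : ℝ) (hα0 : 0 < α) (hα1 : α ≤ 1)
    (φ : ℝ → ℝ) (H : ℝ)
    (hφ : ∀ x ∈ Set.Icc a b, ∀ y ∈ Set.Icc a b, |φ x - φ y| ≤ H * |x - y| ^ α) :
    |(∑ i, φ (hA.eigenvalues i)) - ∑ i, φ (hB.eigenvalues i)| ≤
      H * (∑ i, |hAB.eigenvalues i|) ^ α * (N : ℝ) ^ (1 - α) := by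
  have hab : a ≤ b := by
    have := hAspec ⟨0, hN⟩
    exact le_trans this.1 this.2
  rcases eq_or_lt_of_le hab with heq | hlt
  · -- degenerate case a = b : both matrices equal a • 1
    have hAeq : ∀ i, hA.eigenvalues i = a :=
      fun i => le_antisymm (heq ▸ (hAspec i).2) (hAspec i).1
    have hBeq : ∀ i, hB.eigenvalues i = a :=
      fun i => le_antisymm (heq ▸ (hBspec i).2) (hBspec i).1
    have hABzero : A - B = 0 := by
      rw [herm_eq_smul_one hA a hAeq, herm_eq_smul_one hB a hBeq, sub_self]
    have hev : ∀ i, hAB.eigenvalues i = 0 := eig_zero_of_zero hAB hABzero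
    have hLHS : (∑ i, φ (hA.eigenvalues i)) - ∑ i, φ (hB.eigenvalues i) = 0 := by
      rw [sub_eq_zero]
      exact Finset.sum_congr rfl fun i _ => by rw [hAeq i, hBeq i]
    have hRHS : (∑ i, |hAB.eigenvalues i|) = 0 := by
      exact Finset.sum_eq_zero fun i _ => by rw [hev i, abs_zero]
    rw [hLHS, abs_zero, hRHS, Real.zero_rpow (ne_of_gt hα0), mul_zero, zero_mul]
  · -- main case a < b
    have hH : 0 ≤ H := by
      have h1 := hφ a ⟨le_refl a, hab⟩ b ⟨hab, le_refl b⟩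
      have h2 : (0:ℝ) < |a - b| ^ α :=
        Real.rpow_pos_of_pos (abs_pos.mpr (sub_ne_zero.mpr (ne_of_lt hlt))) α
      nlinarith [abs_nonneg (φ a - φ b)]
    set p := Tuple.sort hA.eigenvalues with hp
    set q := Tuple.sort hB.eigenvalues with hq
    set δ : Fin N → ℝ := fun k => |(hA.eigenvalues ∘ p) k - (hB.eigenvalues ∘ q) k| with hδ
    have step1 : |(∑ i, φ (hA.eigenvalues i)) - ∑ i, φ (hB.eigenvalues i)|
        ≤ H * ∑ k, δ k ^ α := by
      rw [← Equiv.sum_comp p (fun i => φ (hA.eigenvalues i)),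
        ← Equiv.sum_comp q (fun i => φ (hB.eigenvalues i)), ← Finset.sum_sub_distrib]
      refine (Finset.abs_sum_le_sum_abs _ _).trans ?_
      rw [Finset.mul_sum]
      apply Finset.sum_le_sum
      intro k _
      exact hφ (hA.eigenvalues (p k)) (hAspec (p k)) (hB.eigenvalues (q k)) (hBspec (q k))
    have step2 : ∑ k, δ k ^ α ≤ (∑ k, δ k) ^ α * (N:ℝ) ^ (1 - α) :=
      sum_rpow_le hN δ (fun k => abs_nonneg _) α hα0 hα1
    have step3 : ∑ k, δ k ≤ ∑ i, |hAB.eigenvalues i| := lidskii hA hB hAB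
    have step4 : (∑ k, δ k) ^ α ≤ (∑ i, |hAB.eigenvalues i|) ^ α :=
      Real.rpow_le_rpow (Finset.sum_nonneg fun k _ => abs_nonneg _) step3 hα0.le
    have hNpow : (0:ℝ) ≤ (N:ℝ) ^ (1 - α) := Real.rpow_nonneg (Nat.cast_nonneg N) _
    calc |(∑ i, φ (hA.eigenvalues i)) - ∑ i, φ (hB.eigenvalues i)|
        ≤ H * ∑ k, δ k ^ α := step1
      _ ≤ H * ((∑ k, δ k) ^ α * (N:ℝ) ^ (1 - α)) := mul_le_mul_of_nonneg_left step2 hH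
      _ ≤ H * ((∑ i, |hAB.eigenvalues i|) ^ α * (N:ℝ) ^ (1 - α)) :=
          mul_le_mul_of_nonneg_left (mul_le_mul_of_nonneg_right step4 hNpow) hH
      _ = H * (∑ i, |hAB.eigenvalues i|) ^ α * (N : ℝ) ^ (1 - α) := by ring
end

section
/- Let φ(x) = x·log x for x > 0 and φ(0) = 0, and let α ∈ (0, 1). Then for all real 0 ≤ x ≤ y ≤ 1/e: |φ(y) − φ(x)| ≤ (y − x)^α / (α(1 − α)). -/
open Real

private lemma mul_log_antitone {a b : ℝ} (ha : 0 ≤ a) (hab : a ≤ b)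
    (hb : b ≤ 1 / Real.exp 1) : b * Real.log b ≤ a * Real.log a := by
  have he : (1 : ℝ) / Real.exp 1 = Real.exp (-1) := by
    rw [Real.exp_neg]; field_simp
  rw [he] at hb
  have key : AntitoneOn (fun t : ℝ ↦ t * Real.log t) (Set.Icc 0 (Real.exp (-1))) := by
    apply antitoneOn_of_deriv_nonpos (convex_Icc _ _)
    · exact Real.continuous_mul_log.continuousOn
    · intro t ht
      rw [interior_Icc] at ht
      exact ((Real.differentiableOn_mul_log t (by simp [ne_of_gt ht.1])).differentiableAt
        (by simp [isOpen_compl_singleton.mem_nhds, ne_of_gt ht.1])).differentiableWithinAt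
    · intro t ht
      rw [interior_Icc] at ht
      rw [Real.deriv_mul_log (ne_of_gt ht.1)]
      have : Real.log t ≤ Real.log (Real.exp (-1)) :=
        Real.log_le_log ht.1 ht.2.le
      rw [Real.log_exp] at this
      linarith
  exact key ⟨ha, hab.trans hb⟩ ⟨ha.trans hab, hb⟩ hab

/-- For `φ(x) = x log x` (with `φ(0) = 0`), `α ∈ (0,1)` and `0 ≤ x ≤ y ≤ 1/e`:
`|φ(y) - φ(x)| ≤ (y - x)^α / (α (1 - α))`. -/
theorem stmt19 (α : ℝ) (hα : α ∈ Set.Ioo (0 : ℝ) 1) (x y : ℝ)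
    (hx : 0 ≤ x) (hxy : x ≤ y) (hy : y ≤ 1 / Real.exp 1) :
    |y * Real.log y - x * Real.log x| ≤ (y - x) ^ α / (α * (1 - α)) := by
  obtain ⟨hα0, hα1⟩ := hα
  set h := y - x with hh
  have hh0 : 0 ≤ h := by linarith
  have hy0 : 0 ≤ y := hx.trans hxy
  -- step A: the abs is x log x - y log y
  have habs : |y * Real.log y - x * Real.log x| = x * Real.log x - y * Real.log y := by
    rw [abs_of_nonpos (by linarith [mul_log_antitone hx hxy hy])]
    ring
  -- step B: superadditivity
  have hB : x * Real.log x + h * Real.log h ≤ y * Real.log y := by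
    have h1 : x * Real.log x ≤ x * Real.log y := by
      rcases eq_or_lt_of_le hx with h0 | h0
      · simp [← h0]
      · exact mul_le_mul_of_nonneg_left (Real.log_le_log h0 hxy) hx
    have h2 : h * Real.log h ≤ h * Real.log y := by
      rcases eq_or_lt_of_le hh0 with h0 | h0
      · simp [← h0]
      · exact mul_le_mul_of_nonneg_left (Real.log_le_log h0 (by linarith)) hh0
    calc x * Real.log x + h * Real.log h ≤ x * Real.log y + h * Real.log y := by linarith
      _ = y * Real.log y := by rw [hh]; ring
  -- step C: -(h log h) ≤ h^α / (1-α)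
  have hC : -(h * Real.log h) ≤ h ^ α / (1 - α) := by
    rcases eq_or_lt_of_le hh0 with h0 | h0
    · rw [← h0, Real.zero_rpow (ne_of_gt hα0)]
      simp
    · have hlog : -Real.log h ≤ h ^ (α - 1) / (1 - α) := by
        have hu : (0 : ℝ) < h ^ (α - 1) := Real.rpow_pos_of_pos h0 _
        have := Real.log_le_sub_one_of_pos hu
        rw [Real.log_rpow h0] at this
        rw [le_div_iff₀ (by linarith)]
        nlinarith
      have hmul : -(h * Real.log h) = h * (-Real.log h) := by ring
      rw [hmul]
      calc h * (-Real.log h) ≤ h * (h ^ (α - 1) / (1 - α)) :=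
            mul_le_mul_of_nonneg_left hlog hh0
        _ = (h * h ^ (α - 1)) / (1 - α) := by ring
        _ = h ^ α / (1 - α) := by
            congr 1
            nth_rewrite 1 [← Real.rpow_one h]
            rw [← Real.rpow_add h0]
            norm_num
  -- step D
  have hpow : 0 ≤ h ^ α := Real.rpow_nonneg hh0 α
  have hD : h ^ α / (1 - α) ≤ h ^ α / (α * (1 - α)) := by
    apply div_le_div_of_nonneg_left hpow (by nlinarith)
    nlinarith
  rw [habs]
  calc x * Real.log x - y * Real.log y ≤ -(h * Real.log h) := by linarith
    _ ≤ h ^ α / (1 - α) := hC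
    _ ≤ h ^ α / (α * (1 - α)) := hD
end
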